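/- arXiv:1710.09277 — 9 statements merged into one kernel-verified Lean document; each statement's English description precedes it below -/
import Mathlib

section
/- Let A > 0 and let (t_k)_{k≥1} be a sequence of real numbers with t_1 = 1 and 0 < t_k ≤ 1 for all k. Let (a_m)_{m≥1} be a sequence of non-negative real numbers satisfying a_1 ≤ A and, for all m ≥ 2, a_m ≤ a_{m-1}·(1 − t_{m-1}²·a_{m-1}/A). Then for every m ≥ 1, a_m ≤ A/(1 + ∑_{k=1}^{m-1} t_k²). -/
/-- Recursion lemma for sequences of non-negative numbers (Lemma 1):
if `a 1 ≤ A` and `a m ≤ a (m-1) * (1 - t (m-1)^2 * a (m-1) / A)` for `m ≥ 2`,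
with `t 1 = 1` and `0 < t k ≤ 1`, then `a m ≤ A / (1 + ∑_{k=1}^{m-1} t k ^ 2)`. -/
theorem stmt0 (A : ℝ) (hA : 0 < A) (t : ℕ → ℝ) (ht1 : t 1 = 1)
    (ht : ∀ k, 1 ≤ k → 0 < t k ∧ t k ≤ 1)
    (a : ℕ → ℝ) (ha_nonneg : ∀ m, 1 ≤ m → 0 ≤ a m) (ha1 : a 1 ≤ A)
    (harec : ∀ m, 2 ≤ m → a m ≤ a (m - 1) * (1 - (t (m - 1)) ^ 2 * a (m - 1) / A)) :
    ∀ m, 1 ≤ m → a m ≤ A / (1 + ∑ k ∈ Finset.Icc 1 (m - 1), (t k) ^ 2) := by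
  intro m hm
  induction m, hm using Nat.le_induction with
  | base =>
    simp only [Nat.sub_self, Finset.Icc_self]
    norm_num
    simpa using ha1
  | succ m hm ih =>
    have hrec := harec (m + 1) (by omega)
    have hm1 : m + 1 - 1 = m := rfl
    rw [hm1] at hrec ⊢
    have hSsum : (∑ k ∈ Finset.Icc 1 m, (t k) ^ 2)
        = (∑ k ∈ Finset.Icc 1 (m - 1), (t k) ^ 2) + t m ^ 2 := by
      conv_lhs => rw [show m = (m - 1) + 1 by omega]
      rw [Finset.sum_Icc_succ_top (by omega)]
      rw [show m - 1 + 1 = m by omega]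
    rw [hSsum]
    set S := ∑ k ∈ Finset.Icc 1 (m - 1), (t k) ^ 2 with hS
    have hSnn : 0 ≤ S := Finset.sum_nonneg fun k _ => sq_nonneg _
    obtain ⟨htp, htle⟩ := ht m hm
    have hc1 : t m ^ 2 ≤ 1 := by nlinarith
    have hc0 : 0 < t m ^ 2 := by positivity
    have hu0 : 0 ≤ a m := ha_nonneg m hm
    have hB : (0:ℝ) < 1 + S := by linarith
    have hD : (0:ℝ) < 1 + S + t m ^ 2 := by linarith
    have huB : a m * (1 + S) ≤ A := (le_div_iff₀ hB).mp ih
    have hcu : t m ^ 2 * a m ≤ A := by nlinarith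
    have key : a (m + 1) * A ≤ a m * (A - t m ^ 2 * a m) := by
      have h := mul_le_mul_of_nonneg_right hrec (le_of_lt hA)
      calc a (m + 1) * A ≤ a m * (1 - t m ^ 2 * a m / A) * A := h
        _ = a m * (A - t m ^ 2 * a m) := by field_simp
    rw [← add_assoc, le_div_iff₀ hD]
    have h1 : 0 ≤ A - a m * (1 + S) := by linarith
    have h2 : 0 ≤ A - t m ^ 2 * a m := by linarith
    have hprod : 0 ≤ (A - a m * (1 + S)) * (A - t m ^ 2 * a m) := mul_nonneg h1 h2
    nlinarith [sq_nonneg (t m ^ 2 * a m), mul_le_mul_of_nonneg_right key (le_of_lt hD)]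
end

section
/- Let H be a complex Hilbert space, K a closed subspace of H, f ∈ H, and set g = f − P_K(f), where P_K denotes the orthogonal projection onto K. Let ψ ∈ H with ‖ψ‖ = 1 and v := ‖ψ − P_K(ψ)‖ > 0. Let K' be the smallest closed subspace containing K and ψ, and set g' = f − P_{K'}(f). Then ‖g'‖² = ‖g‖² − |⟨g, ψ⟩|²/v². -/
/-- One-step energy identity of the weak orthogonal greedy algorithm:
with `g = f - P_K f`, `‖ψ‖ = 1`, `v = ‖ψ - P_K ψ‖ > 0`, and `K'` the smallest closed
subspace containing `K` and `ψ`, the residual `g' = f - P_{K'} f` satisfies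
`‖g'‖² = ‖g‖² - |⟨g, ψ⟩|² / v²`. -/
theorem stmt2 {H : Type*} [NormedAddCommGroup H] [InnerProductSpace ℂ H] [CompleteSpace H]
    (K : Submodule ℂ H) [CompleteSpace K] (f ψ : H) (hψ : ‖ψ‖ = 1)
    (hv : 0 < ‖ψ - (K.orthogonalProjectionOnto ψ : H)‖)
    (K' : Submodule ℂ H) [CompleteSpace K']
    (hK' : K' = (K ⊔ Submodule.span ℂ {ψ}).topologicalClosure) :
    ‖f - (K'.orthogonalProjectionOnto f : H)‖ ^ 2
      = ‖f - (K.orthogonalProjectionOnto f : H)‖ ^ 2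
        - ‖(inner ℂ (f - (K.orthogonalProjectionOnto f : H)) ψ : ℂ)‖ ^ 2
            / ‖ψ - (K.orthogonalProjectionOnto ψ : H)‖ ^ 2 := by
  set P : H := (K.orthogonalProjectionOnto f : H) with hP
  set Q : H := (K.orthogonalProjectionOnto ψ : H) with hQ
  set g : H := f - P with hg
  set u : H := ψ - Q with hu
  have hu_mem : u ∈ Kᗮ := K.sub_starProjection_mem_orthogonal ψ
  have hg_mem : g ∈ Kᗮ := K.sub_starProjection_mem_orthogonal f
  have hvne : (‖u‖ : ℝ) ≠ 0 := ne_of_gt hv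
  have hvC : ((‖u‖ : ℝ) : ℂ) ≠ 0 := by exact_mod_cast hvne
  set c : ℂ := (inner ℂ u f : ℂ) / (‖u‖ ^ 2 : ℂ) with hc
  have hKle : K ≤ K' := by
    rw [hK']
    exact le_trans le_sup_left (Submodule.le_topologicalClosure _)
  have hψK' : ψ ∈ K' := by
    rw [hK']
    exact Submodule.le_topologicalClosure _
      (Submodule.mem_sup_right (Submodule.mem_span_singleton_self ψ))
  have huK' : u ∈ K' := Submodule.sub_mem _ hψK' (hKle (K.orthogonalProjectionOnto ψ).2)
  have hpK' : P + c • u ∈ K' :=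
    Submodule.add_mem _ (hKle (K.orthogonalProjectionOnto f).2) (Submodule.smul_mem _ _ huK')
  have huP : (inner ℂ u P : ℂ) = 0 :=
    inner_eq_zero_symm.mp (hu_mem P (K.orthogonalProjectionOnto f).2)
  have huu : (inner ℂ u u : ℂ) = (‖u‖ : ℂ) ^ 2 := by
    rw [inner_self_eq_norm_sq_to_K]; norm_cast
  have huf : (inner ℂ u (f - (P + c • u)) : ℂ) = 0 := by
    rw [inner_sub_right, inner_add_right, inner_smul_right, huP, huu, hc]
    field_simp
    simp
  have hres_mem : f - (P + c • u) ∈ Kᗮ := by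
    have h : f - (P + c • u) = g - c • u := by rw [hg]; abel
    rw [h]
    exact Submodule.sub_mem _ hg_mem (Submodule.smul_mem _ _ hu_mem)
  have hK'orth : K'ᗮ = Kᗮ ⊓ (Submodule.span ℂ {ψ})ᗮ := by
    rw [hK', ← Submodule.orthogonal_orthogonal_eq_closure, Submodule.triorthogonal_eq_orthogonal,
      Submodule.inf_orthogonal]
  have hresK' : f - (P + c • u) ∈ K'ᗮ := by
    rw [hK'orth, Submodule.mem_inf]
    refine ⟨hres_mem, ?_⟩
    rw [Submodule.mem_orthogonal_singleton_iff_inner_right]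
    have h : ψ = u + Q := by rw [hu]; abel
    rw [h, inner_add_left, huf, hres_mem Q (K.orthogonalProjectionOnto ψ).2, add_zero]
  have hproj : (K'.orthogonalProjectionOnto f : H) = P + c • u :=
    K'.eq_starProjection_of_mem_orthogonal hpK' hresK'
  -- Pythagoras
  have hsplit : g = (f - (P + c • u)) + c • u := by rw [hg]; abel
  have hortho : (inner ℂ (f - (P + c • u)) (c • u) : ℂ) = 0 := by
    rw [inner_smul_right, inner_eq_zero_symm.mp huf, mul_zero]
  have hpyth : ‖g‖ ^ 2 = ‖f - (P + c • u)‖ ^ 2 + ‖c • u‖ ^ 2 := by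
    rw [hsplit]
    simp only [pow_two]
    exact norm_add_sq_eq_norm_sq_add_norm_sq_of_inner_eq_zero _ _ hortho
  -- relate inner g ψ to inner u f
  have hgu : (inner ℂ g ψ : ℂ) = (inner ℂ g u : ℂ) := by
    have h : ψ = u + Q := by rw [hu]; abel
    rw [h, inner_add_right, inner_eq_zero_symm.mp (hg_mem Q (K.orthogonalProjectionOnto ψ).2),
      add_zero]
  have huf' : (inner ℂ u f : ℂ) = (inner ℂ u g : ℂ) := by
    have h : f = g + P := by rw [hg]; abel
    rw [h, inner_add_right, huP, add_zero]
  have hnorm_eq : ‖(inner ℂ g ψ : ℂ)‖ = ‖(inner ℂ u f : ℂ)‖ := by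
    rw [hgu, huf', ← inner_conj_symm u g, RCLike.norm_conj]
  have hcu : ‖c • u‖ ^ 2 = ‖(inner ℂ g ψ : ℂ)‖ ^ 2 / ‖u‖ ^ 2 := by
    rw [norm_smul, hnorm_eq, hc, norm_div, norm_pow, Complex.norm_real, norm_norm]
    field_simp
  rw [hproj]
  rw [hcu] at hpyth
  linarith
end

section
/- Let H be a complex Hilbert space, D a dictionary (a set of unit vectors whose closed linear span equals H), and M > 0. Let f ∈ H(D,M), i.e., f = ∑_{j=1}^∞ c_j ψ̃_j converging in H with ψ̃_j ∈ D and ∑_{j=1}^∞ |c_j| ≤ M. Let K be a closed subspace of H, g = f − P_K(f), and let t ∈ (0,1]. Suppose ψ ∈ D satisfies v := ‖ψ − P_K(ψ)‖ > 0 and |⟨g, ψ⟩| ≥ t·sup_{φ∈D} |⟨g, φ⟩|. Let K' be the smallest closed subspace containing K and ψ, and g' = f − P_{K'}(f). Then ‖g'‖² ≤ ‖g‖²·(1 − (t/v)²·‖g‖²/M²). -/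
/-- One-step recursion inequality of WOGA: `D` is a dictionary (unit vectors with dense
span), `f ∈ H(D,M)`, `g = f - P_K f`, `ψ ∈ D` with `v = ‖ψ - P_K ψ‖ > 0` and
`|⟨g,ψ⟩| ≥ t·sup_{φ∈D}|⟨g,φ⟩|`; `K'` the smallest closed subspace containing `K` and `ψ`,
`g' = f - P_{K'} f`. Then `‖g'‖² ≤ ‖g‖²·(1 - (t/v)²·‖g‖²/M²)`. -/
theorem stmt3 {H : Type*} [NormedAddCommGroup H] [InnerProductSpace ℂ H] [CompleteSpace H]
    (D : Set H) (hD_unit : ∀ φ ∈ D, ‖φ‖ = 1)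
    (hD_span : (Submodule.span ℂ D).topologicalClosure = ⊤)
    (M : ℝ) (hM : 0 < M)
    (c : ℕ → ℂ) (ψt : ℕ → H) (hψt : ∀ j, ψt j ∈ D)
    (f : H) (hf : HasSum (fun j => c j • ψt j) f)
    (hc_summable : Summable fun j => ‖c j‖) (hcM : ∑' j, ‖c j‖ ≤ M)
    (K : Submodule ℂ H) [CompleteSpace K]
    (t : ℝ) (ht0 : 0 < t) (ht1 : t ≤ 1)
    (ψ : H) (hψD : ψ ∈ D)
    (hv : 0 < ‖ψ - (K.orthogonalProjectionOnto ψ : H)‖)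
    (hsel : t * ⨆ φ : D, ‖(inner ℂ (f - (K.orthogonalProjectionOnto f : H)) (φ : H) : ℂ)‖
        ≤ ‖(inner ℂ (f - (K.orthogonalProjectionOnto f : H)) ψ : ℂ)‖)
    (K' : Submodule ℂ H) [CompleteSpace K']
    (hK' : K' = (K ⊔ Submodule.span ℂ {ψ}).topologicalClosure) :
    ‖f - (K'.orthogonalProjectionOnto f : H)‖ ^ 2
      ≤ ‖f - (K.orthogonalProjectionOnto f : H)‖ ^ 2
          * (1 - (t / ‖ψ - (K.orthogonalProjectionOnto ψ : H)‖) ^ 2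
              * ‖f - (K.orthogonalProjectionOnto f : H)‖ ^ 2 / M ^ 2) := by
  set g : H := f - (K.orthogonalProjectionOnto f : H) with hg
  set e : H := ψ - (K.orthogonalProjectionOnto ψ : H) with he
  set v : ℝ := ‖e‖ with hv_def
  have hgK : g ∈ Kᗮ := Submodule.sub_starProjection_mem_orthogonal (K := K) f
  have hgK' : ∀ u ∈ K, (inner ℂ g u : ℂ) = 0 := (Submodule.mem_orthogonal' K g).mp hgK
  -- S : the sup
  set S : ℝ := ⨆ φ : D, ‖(inner ℂ g (φ : H) : ℂ)‖ with hS
  have hSbdd : BddAbove (Set.range fun φ : D => ‖(inner ℂ g (φ : H) : ℂ)‖) := by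
    refine ⟨‖g‖, ?_⟩
    rintro x ⟨φ, rfl⟩
    calc ‖(inner ℂ g (φ : H) : ℂ)‖ ≤ ‖g‖ * ‖(φ : H)‖ := norm_inner_le_norm _ _
      _ = ‖g‖ := by rw [hD_unit _ φ.2, mul_one]
  haveI : Nonempty D := ⟨⟨ψ, hψD⟩⟩
  have hle_S : ∀ φ : D, ‖(inner ℂ g (φ : H) : ℂ)‖ ≤ S := fun φ => le_ciSup hSbdd φ
  have hS0 : 0 ≤ S := le_trans (norm_nonneg _) (hle_S ⟨ψ, hψD⟩)
  -- ‖g‖² ≤ M * S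
  have hinner_gf : (inner ℂ g f : ℂ) = (‖g‖ : ℂ) ^ 2 := by
    have : (inner ℂ g f : ℂ) = inner ℂ g (g + (K.orthogonalProjectionOnto f : H)) := by
      rw [hg]; congr 1; abel
    rw [this, inner_add_right, hgK' _ (K.orthogonalProjectionOnto f).2, add_zero,
      inner_self_eq_norm_sq_to_K]
    norm_cast
  have hsum : HasSum (fun j => c j * (inner ℂ g (ψt j) : ℂ)) (inner ℂ g f : ℂ) := by
    simpa using (innerSL ℂ g).hasSum hf
  have hg_le_MS : ‖g‖ ^ 2 ≤ M * S := by
    have h1 : ‖(inner ℂ g f : ℂ)‖ ≤ ∑' j, ‖c j‖ * S := by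
      have hsble : ∀ j, ‖c j * (inner ℂ g (ψt j) : ℂ)‖ ≤ ‖c j‖ * S := by
        intro j
        rw [norm_mul]
        exact mul_le_mul_of_nonneg_left (hle_S ⟨ψt j, hψt j⟩) (norm_nonneg _)
      have hsum2 : Summable fun j => ‖c j * (inner ℂ g (ψt j) : ℂ)‖ :=
        Summable.of_nonneg_of_le (fun j => norm_nonneg _) hsble
          (hc_summable.mul_right S)
      calc ‖(inner ℂ g f : ℂ)‖ = ‖∑' j, c j * (inner ℂ g (ψt j) : ℂ)‖ := by rw [hsum.tsum_eq]
        _ ≤ ∑' j, ‖c j * (inner ℂ g (ψt j) : ℂ)‖ := norm_tsum_le_tsum_norm hsum2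
        _ ≤ ∑' j, ‖c j‖ * S := Summable.tsum_le_tsum hsble hsum2 (hc_summable.mul_right S)
    have h2 : ∑' j, ‖c j‖ * S = (∑' j, ‖c j‖) * S := tsum_mul_right
    have h3 : (∑' j, ‖c j‖) * S ≤ M * S := mul_le_mul_of_nonneg_right hcM hS0
    have h4 : ‖(inner ℂ g f : ℂ)‖ = ‖g‖ ^ 2 := by
      rw [hinner_gf, norm_pow, Complex.norm_real, norm_norm]
    linarith [h1, h4, h2 ▸ h1]
  -- the inner product with ψ equals that with e
  set w : ℂ := (inner ℂ g e : ℂ) with hw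
  have hwψ : w = (inner ℂ g ψ : ℂ) := by
    rw [hw, he, inner_sub_right, hgK' _ (K.orthogonalProjectionOnto ψ).2, sub_zero]
  have hw_ge : t * S ≤ ‖w‖ := by rw [hwψ]; exact hsel
  -- candidate point p in K'
  set a : ℂ := (starRingEnd ℂ) w / ((v : ℂ) ^ 2) with ha
  set p : H := (K.orthogonalProjectionOnto f : H) + a • e with hp
  have hpK' : p ∈ K' := by
    rw [hK']
    apply Submodule.le_topologicalClosure
    apply Submodule.add_mem
    · exact Submodule.mem_sup_left (K.orthogonalProjectionOnto f).2
    · apply Submodule.smul_mem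
      apply Submodule.sub_mem
      · exact Submodule.mem_sup_right (Submodule.mem_span_singleton_self ψ)
      · exact Submodule.mem_sup_left (K.orthogonalProjectionOnto ψ).2
  -- distance bound
  have hdist : ‖f - (K'.orthogonalProjectionOnto f : H)‖ ≤ ‖f - p‖ := by
    rw [← Submodule.starProjection_apply, Submodule.starProjection_minimal]
    exact ciInf_le ⟨0, by rintro x ⟨y, rfl⟩; positivity⟩ (⟨p, hpK'⟩ : K')
  -- compute ‖f - p‖²
  have hfp : f - p = g - a • e := by rw [hp, hg]; abel
  have hv2 : (0:ℝ) < v := hv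
  have hvne : v ≠ 0 := ne_of_gt hv2
  have hMne : M ≠ 0 := ne_of_gt hM
  have hnorm_fp : ‖f - p‖ ^ 2 = ‖g‖ ^ 2 - ‖w‖ ^ 2 / v ^ 2 := by
    have hae : (inner ℂ g (a • e) : ℂ) = ((‖w‖ ^ 2 / v ^ 2 : ℝ) : ℂ) := by
      rw [inner_smul_right, ha, div_mul_eq_mul_div, RCLike.conj_mul]
      push_cast
      ring_nf
      exact mul_comm _ _
    have hre : RCLike.re ((inner ℂ g (a • e)) : ℂ) = ‖w‖ ^ 2 / v ^ 2 := by
      rw [hae]; exact RCLike.ofReal_re _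
    have hvc : ‖((v : ℂ)) ^ 2‖ = v ^ 2 := by
      rw [norm_pow, Complex.norm_real, Real.norm_of_nonneg hv2.le]
    have hna : ‖a‖ = ‖w‖ / v ^ 2 := by
      rw [ha, norm_div, RCLike.norm_conj, hvc]
    have h2 : ‖a • e‖ ^ 2 = ‖w‖ ^ 2 / v ^ 2 := by
      rw [norm_smul, hna]
      show (‖w‖ / v ^ 2 * v) ^ 2 = ‖w‖ ^ 2 / v ^ 2
      field_simp
    rw [hfp, @norm_sub_sq ℂ, hre, h2]
    ring
  have hkey : ‖f - (K'.orthogonalProjectionOnto f : H)‖ ^ 2 ≤ ‖g‖ ^ 2 - ‖w‖ ^ 2 / v ^ 2 := by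
    rw [← hnorm_fp]
    exact pow_le_pow_left₀ (norm_nonneg _) hdist 2
  -- final algebra
  have hwM : t * ‖g‖ ^ 2 ≤ ‖w‖ * M := by
    calc t * ‖g‖ ^ 2 ≤ t * (M * S) := by
          exact mul_le_mul_of_nonneg_left hg_le_MS ht0.le
      _ = (t * S) * M := by ring
      _ ≤ ‖w‖ * M := mul_le_mul_of_nonneg_right hw_ge hM.le
  have hfinal : ‖g‖ ^ 2 - ‖w‖ ^ 2 / v ^ 2
      ≤ ‖g‖ ^ 2 * (1 - (t / v) ^ 2 * ‖g‖ ^ 2 / M ^ 2) := by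
    have hM2 : (0:ℝ) < M ^ 2 := by positivity
    have hv2' : (0:ℝ) < v ^ 2 := by positivity
    have h5 : (t * ‖g‖ ^ 2) ^ 2 ≤ (‖w‖ * M) ^ 2 := by
      apply pow_le_pow_left₀ _ hwM 2
      positivity
    have heq : ‖g‖ ^ 2 * (1 - (t / v) ^ 2 * ‖g‖ ^ 2 / M ^ 2)
        = ‖g‖ ^ 2 - t ^ 2 * ‖g‖ ^ 2 * ‖g‖ ^ 2 / (M ^ 2 * v ^ 2) := by
      field_simp
    have h7 : t ^ 2 * ‖g‖ ^ 2 * ‖g‖ ^ 2 / (M ^ 2 * v ^ 2) ≤ ‖w‖ ^ 2 / v ^ 2 := by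
      rw [div_le_div_iff₀ (by positivity) hv2']
      nlinarith [mul_le_mul_of_nonneg_right h5 hv2'.le]
    rw [heq]
    linarith
  calc ‖f - (K'.orthogonalProjectionOnto f : H)‖ ^ 2
      ≤ ‖g‖ ^ 2 - ‖w‖ ^ 2 / v ^ 2 := hkey
    _ ≤ ‖g‖ ^ 2 * (1 - (t / v) ^ 2 * ‖g‖ ^ 2 / M ^ 2) := hfinal
end

section
/- Let H be a complex Hilbert space, D a dictionary (a set of unit vectors whose closed linear span equals H), M > 0, and f ∈ H(D,M). Suppose the Weak Orthogonal Greedy Algorithm with weakness parameters t_k ∈ (0,1] produces selections ψ_1, ψ_2, … ∈ D: with H_0 = {0}, H_k = span{ψ_1,…,ψ_k}, and residuals f_k = f − P_{H_{k-1}}(f), each ψ_k satisfies |⟨f_k, ψ_k⟩| ≥ t_k·sup_{ψ∈D} |⟨f_k, ψ⟩| and v_k := ‖ψ_k − P_{H_{k-1}}(ψ_k)‖ > 0. Then for every n ≥ 1, ‖f_n‖ ≤ M·(1 + ∑_{k=1}^{n-1} (t_k/v_k)²)^{-1/2}. -/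
/-- Orthogonal projection onto (the closure of) a subspace, as a map `H → H`. -/
noncomputable def proj {H : Type*} [NormedAddCommGroup H] [InnerProductSpace ℂ H]
    [CompleteSpace H] (K : Submodule ℂ H) (f : H) : H :=
  haveI : CompleteSpace K.topologicalClosure := K.isClosed_topologicalClosure.completeSpace_coe
  (K.topologicalClosure.orthogonalProjectionOnto f : H)

section auxWOGA
variable {H : Type*} [NormedAddCommGroup H] [InnerProductSpace ℂ H] [CompleteSpace H]

lemma proj_mem' (K : Submodule ℂ H) (f : H) : proj K f ∈ K.topologicalClosure := by
  haveI : CompleteSpace K.topologicalClosure := K.isClosed_topologicalClosure.completeSpace_coe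
  exact (K.topologicalClosure.orthogonalProjectionOnto f).2

lemma proj_inner_eq_zero' (K : Submodule ℂ H) (f : H) :
    ∀ w ∈ K.topologicalClosure, (inner ℂ (f - proj K f) w : ℂ) = 0 := by
  haveI : CompleteSpace K.topologicalClosure := K.isClosed_topologicalClosure.completeSpace_coe
  exact fun w hw => Submodule.starProjection_inner_eq_zero f w hw

lemma proj_min' (K : Submodule ℂ H) (f w : H) (hw : w ∈ K.topologicalClosure) :
    ‖f - proj K f‖ ≤ ‖f - w‖ := by
  have h : (inner ℂ (f - proj K f) (proj K f - w) : ℂ) = 0 :=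
    proj_inner_eq_zero' K f _ (Submodule.sub_mem _ (proj_mem' K f) hw)
  have hdecomp : f - w = (f - proj K f) + (proj K f - w) := by abel
  have hns := norm_add_sq (𝕜 := ℂ) (f - proj K f) (proj K f - w)
  rw [h] at hns
  simp only [map_zero, mul_zero, add_zero, zero_add] at hns
  rw [hdecomp]
  nlinarith [norm_nonneg (f - proj K f), norm_nonneg (proj K f - w),
    norm_nonneg ((f - proj K f) + (proj K f - w)), sq_nonneg (‖proj K f - w‖)]

omit [CompleteSpace H] in
lemma norm_sub_inner_smul_sq (x e : H) (he : ‖e‖ = 1) :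
    ‖x - (inner ℂ e x : ℂ) • e‖ ^ 2 = ‖x‖ ^ 2 - ‖(inner ℂ x e : ℂ)‖ ^ 2 := by
  have h1 : (inner ℂ x ((inner ℂ e x : ℂ) • e) : ℂ) = (inner ℂ e x : ℂ) * (inner ℂ x e : ℂ) :=
    inner_smul_right _ _ _
  have h2 : (inner ℂ e x : ℂ) = starRingEnd ℂ (inner ℂ x e) := (inner_conj_symm e x).symm
  have hre : RCLike.re ((inner ℂ x ((inner ℂ e x : ℂ) • e) : ℂ)) = ‖(inner ℂ x e : ℂ)‖ ^ 2 := by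
    rw [h1, h2, RCLike.conj_mul]
    norm_cast
  have hn : ‖(inner ℂ e x : ℂ) • e‖ ^ 2 = ‖(inner ℂ x e : ℂ)‖ ^ 2 := by
    rw [norm_smul, he, mul_one, h2, RCLike.norm_conj]
  have := norm_sub_sq (𝕜 := ℂ) x ((inner ℂ e x : ℂ) • e)
  rw [this, hre, hn]
  ring

end auxWOGA

lemma rec_bound_WOGA (M2 : ℝ) (hM2 : 0 < M2) (a b : ℕ → ℝ)
    (ha : ∀ k, 0 ≤ a k) (hb : ∀ k, 0 ≤ b k)
    (h1 : a 1 ≤ M2)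
    (hrec : ∀ k, 1 ≤ k → a (k+1) ≤ a k - b k * (a k)^2 / M2) :
    ∀ n, 1 ≤ n → a n * (1 + ∑ k ∈ Finset.Icc 1 (n-1), b k) ≤ M2 := by
  intro n hn
  induction n, hn using Nat.le_induction with
  | base => simp [h1]
  | succ n hn ih =>
    have hsum : ∑ k ∈ Finset.Icc 1 ((n+1)-1), b k
        = (∑ k ∈ Finset.Icc 1 (n-1), b k) + b n := by
      obtain ⟨m, rfl⟩ := Nat.exists_eq_add_of_le hn
      simp only [Nat.add_sub_cancel_left]
      rw [add_comm 1 m, Nat.add_sub_cancel]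
      rw [Finset.sum_Icc_succ_top (by omega)]
    rw [hsum]
    set S : ℝ := ∑ k ∈ Finset.Icc 1 (n-1), b k with hS
    have hSnn : 0 ≤ S := Finset.sum_nonneg fun k _ => hb k
    have hbn := hb n
    have hrecn := hrec n hn
    have goal' : a (n+1) * ((1 + S) + b n) ≤ M2 := by
      rcases le_or_gt (a (n+1)) 0 with h0 | hpos
      · have hz : a (n+1) = 0 := le_antisymm h0 (ha _)
        rw [hz, zero_mul]; exact hM2.le
      · have hq : 0 ≤ b n * a n ^ 2 / M2 := by positivity
        have hanpos : 0 < a n := by linarith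
        have hlt : b n * a n < M2 := by
          have h7 : b n * a n ^ 2 / M2 < a n := by linarith
          rw [div_lt_iff₀ hM2] at h7
          nlinarith
        have hBle : a n * (1 + S) ≤ M2 := ih
        have hX : 0 ≤ M2 - a n * (1 + S) := by linarith
        have h2 : a (n+1) ≤ a n * (1 - b n * a n / M2) := by
          have : a n - b n * a n ^2 / M2 = a n * (1 - b n * a n / M2) := by
            field_simp
          linarith [hrecn, this.symm.le]
        have h3 : 0 < 1 - b n * a n / M2 := by
          rw [sub_pos, div_lt_one hM2]; exact hlt
        have h4 : a (n+1) * ((1 + S) + b n) ≤ a n * (1 - b n * a n / M2) * ((1 + S) + b n) := by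
          apply mul_le_mul_of_nonneg_right h2; linarith
        refine h4.trans ?_
        have hexp : a n * (1 - b n * a n / M2) * ((1 + S) + b n)
            = a n * (1 + S) + a n * b n * (M2 - a n * (1 + S))/M2 - b n^2 * a n^2/M2 := by
          field_simp; ring
        rw [hexp]
        have h5 : a n * b n * (M2 - a n * (1 + S)) / M2 ≤ M2 - a n * (1 + S) := by
          rw [div_le_iff₀ hM2]
          nlinarith [mul_nonneg hX (sub_nonneg.2 hlt.le)]
        have h6 : 0 ≤ b n^2 * a n^2/M2 := by positivity
        linarith
    calc a (n+1) * (1 + (S + b n)) = a (n+1) * ((1 + S) + b n) := by ring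
      _ ≤ M2 := goal'

/-- A posteriori error bound of WOGA: for `f ∈ H(D,M)` and WOGA selections `ψ k` with
weakness parameters `t k`, residuals `fk n = f - P_{H_{n-1}} f`, and
`v k = ‖ψ k - P_{H_{k-1}} ψ k‖ > 0`, one has
`‖fk n‖ ≤ M·(1 + ∑_{k=1}^{n-1} (t k / v k)²)^{-1/2}`. -/
theorem stmt4 {H : Type*} [NormedAddCommGroup H] [InnerProductSpace ℂ H] [CompleteSpace H]
    (D : Set H) (hD_unit : ∀ φ ∈ D, ‖φ‖ = 1)
    (hD_span : (Submodule.span ℂ D).topologicalClosure = ⊤)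
    (M : ℝ) (hM : 0 < M)
    (c : ℕ → ℂ) (ψt : ℕ → H) (hψt : ∀ j, ψt j ∈ D)
    (f : H) (hf : HasSum (fun j => c j • ψt j) f)
    (hc_summable : Summable fun j => ‖c j‖) (hcM : ∑' j, ‖c j‖ ≤ M)
    (t : ℕ → ℝ) (ht : ∀ k, 1 ≤ k → 0 < t k ∧ t k ≤ 1)
    (ψ : ℕ → H) (hψD : ∀ k, 1 ≤ k → ψ k ∈ D)
    (Hk : ℕ → Submodule ℂ H)
    (hHk : ∀ k, Hk k = Submodule.span ℂ (ψ '' {j | 1 ≤ j ∧ j ≤ k}))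
    (fk : ℕ → H) (hfk : ∀ n, 1 ≤ n → fk n = f - proj (Hk (n - 1)) f)
    (hsel : ∀ k, 1 ≤ k →
      t k * ⨆ φ : D, ‖(inner ℂ (fk k) (φ : H) : ℂ)‖ ≤ ‖(inner ℂ (fk k) (ψ k) : ℂ)‖)
    (hv : ∀ k, 1 ≤ k → 0 < ‖ψ k - proj (Hk (k - 1)) (ψ k)‖) :
    ∀ n, 1 ≤ n → ‖fk n‖ ≤
      M / Real.sqrt (1 + ∑ k ∈ Finset.Icc 1 (n - 1),
        (t k / ‖ψ k - proj (Hk (k - 1)) (ψ k)‖) ^ 2) := by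
  -- notation
  set a : ℕ → ℝ := fun m => ‖fk m‖ ^ 2 with ha_def
  set b : ℕ → ℝ := fun k => (t k / ‖ψ k - proj (Hk (k - 1)) (ψ k)‖) ^ 2 with hb_def
  -- ‖f‖ ≤ M
  have hnorm_eq : (fun j => ‖c j • ψt j‖) = fun j => ‖c j‖ := by
    funext j; rw [norm_smul, hD_unit _ (hψt j), mul_one]
  have hfM : ‖f‖ ≤ M := by
    have h1 : ‖f‖ ≤ ∑' j, ‖c j • ψt j‖ := by
      rw [← hf.tsum_eq]
      exact norm_tsum_le_tsum_norm (by rw [hnorm_eq]; exact hc_summable)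
    rw [hnorm_eq] at h1
    exact h1.trans hcM
  -- a 1 ≤ M^2
  have ha1 : a 1 ≤ M ^ 2 := by
    have h1 : ‖fk 1‖ ≤ ‖f‖ := by
      rw [hfk 1 le_rfl]
      calc ‖f - proj (Hk 0) f‖ ≤ ‖f - 0‖ :=
            proj_min' _ _ _ (Submodule.zero_mem _)
        _ = ‖f‖ := by rw [sub_zero]
    have := norm_nonneg (fk 1)
    simp only [ha_def]
    nlinarith
  -- monotonicity of subspaces
  have hmono : ∀ n, 1 ≤ n →
      (Hk (n-1)).topologicalClosure ≤ (Hk n).topologicalClosure := by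
    intro n hn
    apply Submodule.topologicalClosure_mono
    rw [hHk, hHk]
    apply Submodule.span_mono
    apply Set.image_mono
    intro j hj
    obtain ⟨h1j, h2j⟩ := hj
    exact ⟨h1j, by omega⟩
  -- main recursion
  have hrec : ∀ n, 1 ≤ n → a (n+1) ≤ a n - b n * (a n)^2 / M^2 := by
    intro n hn
    -- orthogonality of residual
    have horth : ∀ w ∈ (Hk (n-1)).topologicalClosure, (inner ℂ (fk n) w : ℂ) = 0 := by
      rw [hfk n hn]; exact proj_inner_eq_zero' _ _
    -- ⟪fk n, f⟫ = ‖fk n‖²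
    have hinf : (inner ℂ (fk n) f : ℂ) = ((‖fk n‖ ^ 2 : ℝ) : ℂ) := by
      have hd : f = fk n + proj (Hk (n-1)) f := by rw [hfk n hn]; abel
      calc (inner ℂ (fk n) f : ℂ)
          = inner ℂ (fk n) (fk n + proj (Hk (n-1)) f) := by rw [← hd]
        _ = (inner ℂ (fk n) (fk n) : ℂ) + inner ℂ (fk n) (proj (Hk (n-1)) f) :=
            inner_add_right _ _ _
        _ = (inner ℂ (fk n) (fk n) : ℂ) := by
            rw [horth _ (proj_mem' _ _), add_zero]
        _ = ((‖fk n‖ ^ 2 : ℝ) : ℂ) := by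
            rw [inner_self_eq_norm_sq_to_K]; norm_cast
    -- the sup S
    haveI hDne : Nonempty D := ⟨⟨ψt 0, hψt 0⟩⟩
    set S : ℝ := ⨆ φ : D, ‖(inner ℂ (fk n) (φ : H) : ℂ)‖ with hS_def
    have hbdd : BddAbove (Set.range fun φ : D => ‖(inner ℂ (fk n) (φ : H) : ℂ)‖) := by
      refine ⟨‖fk n‖, ?_⟩
      rintro x ⟨φ, rfl⟩
      calc ‖(inner ℂ (fk n) (φ : H) : ℂ)‖ ≤ ‖fk n‖ * ‖(φ : H)‖ := norm_inner_le_norm _ _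
        _ = ‖fk n‖ := by rw [hD_unit _ φ.2, mul_one]
    have hfle : ∀ φ : D, ‖(inner ℂ (fk n) (φ : H) : ℂ)‖ ≤ S := fun φ => le_ciSup hbdd φ
    have hSnn : 0 ≤ S := le_trans (norm_nonneg _) (hfle ⟨ψt 0, hψt 0⟩)
    -- ‖fk n‖² ≤ M * S
    have hsum2 : HasSum (fun j => c j * (inner ℂ (fk n) (ψt j) : ℂ)) (inner ℂ (fk n) f) := by
      have := hf.mapL (innerSL ℂ (fk n))
      simpa [inner_smul_right] using this
    have hsummn : Summable (fun j => ‖c j * (inner ℂ (fk n) (ψt j) : ℂ)‖) := by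
      apply Summable.of_nonneg_of_le (fun j => norm_nonneg _)
        (fun j => ?_) (hc_summable.mul_right ‖fk n‖)
      rw [norm_mul]
      exact mul_le_mul_of_nonneg_left
        (by calc ‖(inner ℂ (fk n) (ψt j) : ℂ)‖ ≤ ‖fk n‖ * ‖ψt j‖ := norm_inner_le_norm _ _
              _ = ‖fk n‖ := by rw [hD_unit _ (hψt j), mul_one]) (norm_nonneg _)
    have hMS : ‖fk n‖ ^ 2 ≤ M * S := by
      have e1 : ‖(inner ℂ (fk n) f : ℂ)‖ = ‖fk n‖ ^ 2 := by
        rw [hinf]; simp [abs_of_nonneg (sq_nonneg ‖fk n‖)]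
      have e2 : ‖(inner ℂ (fk n) f : ℂ)‖ ≤ ∑' j, ‖c j * (inner ℂ (fk n) (ψt j) : ℂ)‖ := by
        rw [← hsum2.tsum_eq]
        exact norm_tsum_le_tsum_norm hsummn
      have e3 : ∑' j, ‖c j * (inner ℂ (fk n) (ψt j) : ℂ)‖ ≤ ∑' j, ‖c j‖ * S := by
        apply Summable.tsum_le_tsum _ hsummn (hc_summable.mul_right S)
        intro j
        rw [norm_mul]
        exact mul_le_mul_of_nonneg_left (hfle ⟨ψt j, hψt j⟩) (norm_nonneg _)
      have e4 : ∑' j, ‖c j‖ * S = (∑' j, ‖c j‖) * S := tsum_mul_right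
      have e5 : (∑' j, ‖c j‖) * S ≤ M * S := mul_le_mul_of_nonneg_right hcM hSnn
      rw [← e1]; linarith
    -- lower bound for ⟪fk n, ψ n⟫
    have hlowψ : t n * ‖fk n‖ ^ 2 ≤ M * ‖(inner ℂ (fk n) (ψ n) : ℂ)‖ := by
      calc t n * ‖fk n‖ ^ 2 ≤ t n * (M * S) :=
            mul_le_mul_of_nonneg_left hMS (ht n hn).1.le
        _ = M * (t n * S) := by ring
        _ ≤ M * ‖(inner ℂ (fk n) (ψ n) : ℂ)‖ :=
            mul_le_mul_of_nonneg_left (hsel n hn) hM.le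
    -- the normalized orthogonal direction
    set g : H := ψ n - proj (Hk (n-1)) (ψ n) with hg_def
    set v : ℝ := ‖g‖ with hv_def
    have hvpos : 0 < v := hv n hn
    set e : H := ((v : ℂ))⁻¹ • g with he_def
    have henorm : ‖e‖ = 1 := by
      rw [he_def, norm_smul, norm_inv, Complex.norm_real, Real.norm_eq_abs,
        abs_of_pos hvpos, ← hv_def, inv_mul_cancel₀ hvpos.ne']
    have hiψg : (inner ℂ (fk n) (ψ n) : ℂ) = inner ℂ (fk n) g := by
      have hz : (inner ℂ (fk n) (ψ n - g) : ℂ) = 0 := by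
        have : ψ n - g = proj (Hk (n-1)) (ψ n) := by rw [hg_def]; abel
        rw [this]
        exact horth _ (proj_mem' _ _)
      rw [inner_sub_right] at hz
      linear_combination hz
    have hie : ‖(inner ℂ (fk n) e : ℂ)‖ = ‖(inner ℂ (fk n) (ψ n) : ℂ)‖ / v := by
      rw [he_def, inner_smul_right, norm_mul, norm_inv, Complex.norm_real,
        Real.norm_eq_abs, abs_of_pos hvpos, ← hiψg]
      ring
    -- e belongs to the closure of Hk n
    have hψmem : ψ n ∈ (Hk n).topologicalClosure := by
      apply (Hk n).le_topologicalClosure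
      rw [hHk]
      exact Submodule.subset_span ⟨n, ⟨hn, le_refl n⟩, rfl⟩
    have hemem : e ∈ (Hk n).topologicalClosure := by
      apply Submodule.smul_mem
      exact Submodule.sub_mem _ hψmem (hmono n hn (proj_mem' _ _))
    -- step inequality
    have hfk1 : fk (n+1) = f - proj (Hk n) f := by
      have := hfk (n+1) (by omega)
      simpa using this
    set w : H := proj (Hk (n-1)) f + (inner ℂ e (fk n) : ℂ) • e with hw_def
    have hwmem : w ∈ (Hk n).topologicalClosure :=
      Submodule.add_mem _ (hmono n hn (proj_mem' _ _)) (Submodule.smul_mem _ _ hemem)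
    have hle : ‖fk (n+1)‖ ≤ ‖f - w‖ := by
      rw [hfk1]; exact proj_min' _ _ _ hwmem
    have hfw : f - w = fk n - (inner ℂ e (fk n) : ℂ) • e := by
      rw [hw_def, hfk n hn]; abel
    have hsq : ‖fk (n+1)‖ ^ 2 ≤ ‖fk n‖ ^ 2 - ‖(inner ℂ (fk n) e : ℂ)‖ ^ 2 := by
      calc ‖fk (n+1)‖ ^ 2 ≤ ‖f - w‖ ^ 2 := pow_le_pow_left₀ (norm_nonneg _) hle 2
        _ = ‖fk n - (inner ℂ e (fk n) : ℂ) • e‖ ^ 2 := by rw [hfw]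
        _ = ‖fk n‖ ^ 2 - ‖(inner ℂ (fk n) e : ℂ)‖ ^ 2 :=
            norm_sub_inner_smul_sq (fk n) e henorm
    -- lower bound the removed component
    have h8 : t n * ‖fk n‖ ^ 2 / (M * v) ≤ ‖(inner ℂ (fk n) e : ℂ)‖ := by
      rw [hie]
      rw [div_le_div_iff₀ (by positivity) hvpos]
      calc t n * ‖fk n‖ ^ 2 * v = (t n * ‖fk n‖ ^ 2) * v := by ring
        _ ≤ (M * ‖(inner ℂ (fk n) (ψ n) : ℂ)‖) * v :=
            mul_le_mul_of_nonneg_right hlowψ hvpos.le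
        _ = ‖(inner ℂ (fk n) (ψ n) : ℂ)‖ * (M * v) := by ring
    have h8nn : 0 ≤ t n * ‖fk n‖ ^ 2 / (M * v) := by
      have := (ht n hn).1
      positivity
    have h9 : (t n * ‖fk n‖ ^ 2 / (M * v)) ^ 2 ≤ ‖(inner ℂ (fk n) e : ℂ)‖ ^ 2 :=
      pow_le_pow_left₀ h8nn h8 2
    have hbn : b n = (t n / v) ^ 2 := by
      rw [hb_def]
    have h10 : (t n * ‖fk n‖ ^ 2 / (M * v)) ^ 2 = b n * (‖fk n‖ ^ 2) ^ 2 / M ^ 2 := by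
      rw [hbn]
      field_simp
    show ‖fk (n+1)‖ ^ 2 ≤ ‖fk n‖ ^ 2 - b n * (‖fk n‖ ^ 2) ^ 2 / M ^ 2
    rw [← h10]
    linarith [h9, hsq]
  -- conclusion
  intro n hn
  have hbnn : ∀ k, 0 ≤ b k := by
    intro k; rw [hb_def]; positivity
  have hrb := rec_bound_WOGA (M^2) (by positivity) a b
    (fun k => by rw [ha_def]; positivity) hbnn ha1 hrec n hn
  have hBpos : 0 < 1 + ∑ k ∈ Finset.Icc 1 (n-1), b k := by
    have : 0 ≤ ∑ k ∈ Finset.Icc 1 (n-1), b k := Finset.sum_nonneg fun k _ => hbnn k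
    linarith
  have h : ‖fk n‖ ^ 2 ≤ M^2 / (1 + ∑ k ∈ Finset.Icc 1 (n-1), b k) :=
    (le_div_iff₀ hBpos).2 hrb
  calc ‖fk n‖ = Real.sqrt (‖fk n‖^2) := (Real.sqrt_sq (norm_nonneg _)).symm
    _ ≤ Real.sqrt (M^2 / (1 + ∑ k ∈ Finset.Icc 1 (n-1), b k)) := Real.sqrt_le_sqrt h
    _ = Real.sqrt (M^2) / Real.sqrt (1 + ∑ k ∈ Finset.Icc 1 (n-1), b k) :=
        Real.sqrt_div (by positivity) _
    _ = M / Real.sqrt (1 + ∑ k ∈ Finset.Icc 1 (n-1), b k) := by rw [Real.sqrt_sq hM.le]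
end

section
/- Let H be a complex Hilbert space, M > 0, and let f = ∑_{j=1}^∞ c_j ψ̃_j converging in H with ‖ψ̃_j‖ ≤ 1 for all j and ∑_{j=1}^∞ |c_j| ≤ M. Let g ∈ H satisfy ⟨g, f − g⟩ = 0. Let t ∈ (0,1] and r > 0, and let B ∈ H be a unit vector such that |⟨g, B⟩| ≥ (t/r)·sup_{j≥1} |⟨g, ψ̃_j⟩|. Then ‖g − ⟨g, B⟩B‖² ≤ ‖g‖²·(1 − (t/r)²·‖g‖²/M²). -/
/-- One-step recursion inequality of WPre-OGA: with `f = ∑ c j • ψt j`, `‖ψt j‖ ≤ 1`,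
`∑|c j| ≤ M`, `⟨g, f-g⟩ = 0`, `t ∈ (0,1]`, `r > 0`, and a unit vector `B` with
`|⟨g,B⟩| ≥ (t/r)·sup_j |⟨g, ψt j⟩|`, one has
`‖g - ⟨g,B⟩B‖² ≤ ‖g‖²·(1 - (t/r)²·‖g‖²/M²)`.
(Here `⟨g,B⟩`, linear in the first argument, is Mathlib's `inner ℂ B g`.) -/
theorem stmt8 {H : Type*} [NormedAddCommGroup H] [InnerProductSpace ℂ H] [CompleteSpace H]
    (M : ℝ) (hM : 0 < M) (c : ℕ → ℂ) (ψt : ℕ → H) (hψt : ∀ j, ‖ψt j‖ ≤ 1)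
    (f : H) (hf : HasSum (fun j => c j • ψt j) f)
    (hc_summable : Summable fun j => ‖c j‖) (hcM : ∑' j, ‖c j‖ ≤ M)
    (g : H) (hg : (inner ℂ g (f - g) : ℂ) = 0)
    (t r : ℝ) (ht0 : 0 < t) (ht1 : t ≤ 1) (hr : 0 < r)
    (B : H) (hB : ‖B‖ = 1)
    (hsel : (t / r) * ⨆ j, ‖(inner ℂ g (ψt j) : ℂ)‖ ≤ ‖(inner ℂ g B : ℂ)‖) :
    ‖g - (inner ℂ B g : ℂ) • B‖ ^ 2
      ≤ ‖g‖ ^ 2 * (1 - (t / r) ^ 2 * ‖g‖ ^ 2 / M ^ 2) := by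
  set a : ℂ := inner ℂ B g with ha
  set s : ℝ := ⨆ j, ‖(inner ℂ g (ψt j) : ℂ)‖ with hs
  have hbdd : BddAbove (Set.range fun j => ‖(inner ℂ g (ψt j) : ℂ)‖) := by
    refine ⟨‖g‖, ?_⟩
    rintro x ⟨j, rfl⟩
    calc ‖(inner ℂ g (ψt j) : ℂ)‖ ≤ ‖g‖ * ‖ψt j‖ := norm_inner_le_norm _ _
      _ ≤ ‖g‖ * 1 := by
          exact mul_le_mul_of_nonneg_left (hψt j) (norm_nonneg g)
      _ = ‖g‖ := mul_one _
  have hs0 : 0 ≤ s := le_trans (norm_nonneg _) (le_ciSup hbdd 0)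
  -- inner ℂ g f = ‖g‖²
  have hgf : (inner ℂ g f : ℂ) = (‖g‖ : ℂ) ^ 2 := by
    have := hg
    rw [inner_sub_right, sub_eq_zero] at this
    rw [this, inner_self_eq_norm_sq_to_K]
    norm_num
  -- sum of inner products
  have hsum : HasSum (fun j => (inner ℂ g (c j • ψt j) : ℂ)) (inner ℂ g f) :=
    (innerSL ℂ g).hasSum hf
  have hterm : ∀ j, ‖(inner ℂ g (c j • ψt j) : ℂ)‖ ≤ ‖c j‖ * s := by
    intro j
    rw [inner_smul_right, norm_mul]
    exact mul_le_mul_of_nonneg_left (le_ciSup hbdd j) (norm_nonneg _)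
  have hsummable2 : Summable fun j => ‖c j‖ * s := hc_summable.mul_right s
  have hsummable1 : Summable fun j => ‖(inner ℂ g (c j • ψt j) : ℂ)‖ :=
    Summable.of_nonneg_of_le (fun j => norm_nonneg _) hterm hsummable2
  have hle : ‖(inner ℂ g f : ℂ)‖ ≤ M * s := by
    calc ‖(inner ℂ g f : ℂ)‖ = ‖∑' j, (inner ℂ g (c j • ψt j) : ℂ)‖ := by rw [hsum.tsum_eq]
      _ ≤ ∑' j, ‖(inner ℂ g (c j • ψt j) : ℂ)‖ := norm_tsum_le_tsum_norm hsummable1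
      _ ≤ ∑' j, ‖c j‖ * s := Summable.tsum_le_tsum hterm hsummable1 hsummable2
      _ = (∑' j, ‖c j‖) * s := tsum_mul_right
      _ ≤ M * s := mul_le_mul_of_nonneg_right hcM hs0
  have hg2 : ‖g‖ ^ 2 ≤ M * s := by
    rw [hgf] at hle
    simpa using hle
  -- lower bound on |a|
  have haB : ‖a‖ = ‖(inner ℂ g B : ℂ)‖ := by
    rw [ha]; exact norm_inner_symm B g
  have hlow : (t / r) * (‖g‖ ^ 2 / M) ≤ ‖a‖ := by
    rw [haB]
    refine le_trans ?_ hsel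
    refine mul_le_mul_of_nonneg_left ?_ (le_of_lt (div_pos ht0 hr))
    rw [div_le_iff₀ hM]
    linarith [hg2]
  -- Pythagoras
  have hpyth : ‖g - a • B‖ ^ 2 = ‖g‖ ^ 2 - ‖a‖ ^ 2 := by
    have := @norm_sub_sq ℂ _ _ _ _ g (a • B)
    rw [inner_smul_right] at this
    have h2 : (inner ℂ g B : ℂ) = starRingEnd ℂ a := by rw [ha, inner_conj_symm]
    rw [h2] at this
    have h3 : RCLike.re (a * starRingEnd ℂ a) = ‖a‖ ^ 2 := by
      rw [RCLike.mul_conj, ← RCLike.ofReal_pow, RCLike.ofReal_re]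
    rw [h3, norm_smul, hB, mul_one] at this
    rw [this]; ring
  rw [hpyth]
  have htr : 0 < t / r := div_pos ht0 hr
  have key : (t / r) ^ 2 * ‖g‖ ^ 4 / M ^ 2 ≤ ‖a‖ ^ 2 := by
    have := mul_self_le_mul_self (by positivity) hlow
    calc (t / r) ^ 2 * ‖g‖ ^ 4 / M ^ 2
        = ((t / r) * (‖g‖ ^ 2 / M)) * ((t / r) * (‖g‖ ^ 2 / M)) := by
          field_simp
      _ ≤ ‖a‖ * ‖a‖ := this
      _ = ‖a‖ ^ 2 := (sq ‖a‖).symm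
  have : ‖g‖ ^ 2 * (1 - (t / r) ^ 2 * ‖g‖ ^ 2 / M ^ 2)
      = ‖g‖ ^ 2 - (t / r) ^ 2 * ‖g‖ ^ 4 / M ^ 2 := by
    field_simp
  rw [this]
  linarith [key]
end

section
/- Let H be a complex Hilbert space, N > 0, and let f = ∑_{k=1}^∞ d_k φ_k converging in H with ‖φ_k‖ ≤ 1 for all k and ∑_{k=1}^∞ |d_k| ≤ N. Let g ∈ H satisfy ⟨g, f − g⟩ = 0, and let B ∈ H be a unit vector such that |⟨g, φ_k⟩| ≤ |⟨g, B⟩| for all k ≥ 1. Then ‖g − ⟨g, B⟩B‖² ≤ ‖g‖²·(1 − ‖g‖²/N²). -/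
/-- One-step recursion inequality of Pre-OGA with maximal selection: with
`f = ∑ d k • φ k`, `‖φ k‖ ≤ 1`, `∑|d k| ≤ N`, `⟨g, f-g⟩ = 0`, and a unit vector `B`
with `|⟨g, φ k⟩| ≤ |⟨g, B⟩|` for all `k`, one has
`‖g - ⟨g,B⟩B‖² ≤ ‖g‖²·(1 - ‖g‖²/N²)`.
(Here `⟨g,B⟩`, linear in the first argument, is Mathlib's `inner ℂ B g`.) -/
theorem stmt10 {H : Type*} [NormedAddCommGroup H] [InnerProductSpace ℂ H] [CompleteSpace H]
    (N : ℝ) (hN : 0 < N) (d : ℕ → ℂ) (φ : ℕ → H) (hφ : ∀ k, ‖φ k‖ ≤ 1)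
    (f : H) (hf : HasSum (fun k => d k • φ k) f)
    (hd_summable : Summable fun k => ‖d k‖) (hdN : ∑' k, ‖d k‖ ≤ N)
    (g : H) (hg : (inner ℂ g (f - g) : ℂ) = 0)
    (B : H) (hB : ‖B‖ = 1)
    (hsel : ∀ k, ‖(inner ℂ g (φ k) : ℂ)‖ ≤ ‖(inner ℂ g B : ℂ)‖) :
    ‖g - (inner ℂ B g : ℂ) • B‖ ^ 2 ≤ ‖g‖ ^ 2 * (1 - ‖g‖ ^ 2 / N ^ 2) := by
  set c : ℂ := inner ℂ B g with hc
  have hcB : ‖c‖ = ‖(inner ℂ g B : ℂ)‖ := norm_inner_symm B g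
  -- inner ℂ g f = inner ℂ g g
  have hgf : (inner ℂ g f : ℂ) = inner ℂ g g := by
    rw [inner_sub_right, sub_eq_zero] at hg
    exact hg
  -- HasSum of inner ℂ products
  have hsum : HasSum (fun k => d k * (inner ℂ g (φ k) : ℂ)) (inner ℂ g f : ℂ) := by
    have := hf.mapL (innerSL ℂ g)
    simpa [inner_smul_right] using this
  -- bound ‖g‖^2 ≤ N * ‖inner ℂ g B‖
  have hbound : ‖g‖ ^ 2 ≤ N * ‖(inner ℂ g B : ℂ)‖ := by
    have hnormsum : Summable fun k => ‖d k * (inner ℂ g (φ k) : ℂ)‖ := by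
      apply Summable.of_nonneg_of_le (fun k => norm_nonneg _)
        (fun k => ?_) (hd_summable.mul_right ‖(inner ℂ g B : ℂ)‖)
      rw [norm_mul]
      exact mul_le_mul_of_nonneg_left (hsel k) (norm_nonneg _)
    have h1 : ‖(inner ℂ g f : ℂ)‖ ≤ ∑' k, ‖d k * (inner ℂ g (φ k) : ℂ)‖ := by
      rw [← hsum.tsum_eq]
      exact norm_tsum_le_tsum_norm hnormsum
    have h2 : ∑' k, ‖d k * (inner ℂ g (φ k) : ℂ)‖ ≤ (∑' k, ‖d k‖) * ‖(inner ℂ g B : ℂ)‖ := by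
      rw [← tsum_mul_right]
      apply Summable.tsum_le_tsum _ hnormsum (hd_summable.mul_right _)
      intro k
      rw [norm_mul]
      exact mul_le_mul_of_nonneg_left (hsel k) (norm_nonneg _)
    have h3 : (∑' k, ‖d k‖) * ‖(inner ℂ g B : ℂ)‖ ≤ N * ‖(inner ℂ g B : ℂ)‖ :=
      mul_le_mul_of_nonneg_right hdN (norm_nonneg _)
    have h4 : ‖g‖ ^ 2 = ‖(inner ℂ g f : ℂ)‖ := by
      rw [hgf, inner_self_eq_norm_sq_to_K]
      simp [sq_abs]
    linarith
  -- Pythagoras: ‖g - c • B‖^2 = ‖g‖^2 - ‖c‖^2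
  have hpyth : ‖g - c • B‖ ^ 2 = ‖g‖ ^ 2 - ‖c‖ ^ 2 := by
    have := @norm_sub_sq ℂ H _ _ _ g (c • B)
    have hib : (inner ℂ g (c • B) : ℂ) = c * inner ℂ g B := inner_smul_right _ _ _
    have hgB : (inner ℂ g B : ℂ) = starRingEnd ℂ c := by
      rw [hc, ← inner_conj_symm]
    rw [hib, hgB] at this
    have hre : RCLike.re (c * (starRingEnd ℂ) c) = ‖c‖ ^ 2 := by
      simp [RCLike.mul_conj, ← Complex.ofReal_pow]
    rw [this, norm_smul, hB, hre]
    ring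
  rw [hpyth]
  have hcb2 : ‖g‖ ^ 2 ≤ N * ‖c‖ := by rw [hcB]; exact hbound
  have hN2 : (0:ℝ) < N ^ 2 := by positivity
  have key : ‖g‖ ^ 2 * ‖g‖ ^ 2 / N ^ 2 ≤ ‖c‖ ^ 2 := by
    rw [div_le_iff₀ hN2]
    nlinarith [norm_nonneg c, norm_nonneg g, sq_nonneg (‖g‖^2 - N * ‖c‖)]
  have : ‖g‖ ^ 2 * (1 - ‖g‖ ^ 2 / N ^ 2) = ‖g‖ ^ 2 - ‖g‖ ^ 2 * ‖g‖ ^ 2 / N ^ 2 := by ring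
  rw [this]
  linarith
end

section
/- Let H be a complex Hilbert space, N > 0, and let f = ∑_{k=1}^∞ d_k φ_k converging in H with ‖φ_k‖ ≤ 1 for all k and ∑_{k=1}^∞ |d_k| ≤ N. Let (B_n)_{n≥1} be an orthonormal sequence in H and define f_n = f − ∑_{j=1}^{n-1} ⟨f, B_j⟩B_j. Suppose that for every n ≥ 1 and every k ≥ 1, |⟨f_n, φ_k⟩| ≤ |⟨f_n, B_n⟩|. Then for every n ≥ 1, ‖f_n‖ ≤ N/√n. -/
open scoped ComplexConjugate

/-- Arithmetic step: if `0 ≤ t ≤ s/n` with `s > 0`, `n ≥ 1`, then `t - t²/s ≤ s/(n+1)`. -/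
lemma stmt11_arith (s t : ℝ) (n : ℕ) (hn : 1 ≤ n) (hs : 0 < s) (ht : 0 ≤ t)
    (hts : t ≤ s / n) : t - t ^ 2 / s ≤ s / (n + 1) := by
  have hn1 : (1 : ℝ) ≤ n := by exact_mod_cast hn
  have hnpos : (0 : ℝ) < n := by linarith
  have h1 : t * n ≤ s := by
    rw [le_div_iff₀ hnpos] at hts; linarith
  have h2 : t ≤ s := by nlinarith
  have key : 0 ≤ (s - t * n) * (s - t) + t ^ 2 := by nlinarith
  have e : t - t ^ 2 / s = (t * s - t ^ 2) / s := by field_simp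
  rw [e, div_le_div_iff₀ hs (by linarith : (0:ℝ) < (n:ℝ) + 1)]
  nlinarith [key]

/-- Convergence rate of Pre-OGA with maximal selection. -/
theorem stmt11 {H : Type*} [NormedAddCommGroup H] [InnerProductSpace ℂ H] [CompleteSpace H]
    (N : ℝ) (hN : 0 < N) (d : ℕ → ℂ) (φ : ℕ → H) (hφ : ∀ k, ‖φ k‖ ≤ 1)
    (f : H) (hf : HasSum (fun k => d k • φ k) f)
    (hd_summable : Summable fun k => ‖d k‖) (hdN : ∑' k, ‖d k‖ ≤ N)
    (B : ℕ → H) (hB_unit : ∀ n, 1 ≤ n → ‖B n‖ = 1)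
    (hB_orth : ∀ m n, 1 ≤ m → 1 ≤ n → m ≠ n → (inner ℂ (B m) (B n) : ℂ) = 0)
    (fn : ℕ → H)
    (hfn : ∀ n, 1 ≤ n →
      fn n = f - ∑ j ∈ Finset.Icc 1 (n - 1), (inner ℂ (B j) f : ℂ) • B j)
    (hsel : ∀ n, 1 ≤ n → ∀ k, ‖(inner ℂ (fn n) (φ k) : ℂ)‖ ≤ ‖(inner ℂ (fn n) (B n) : ℂ)‖) :
    ∀ n, 1 ≤ n → ‖fn n‖ ≤ N / Real.sqrt n := by
  set a : ℕ → ℝ := fun n => ‖(inner ℂ (fn n) (B n) : ℂ)‖ with ha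
  have ha_nonneg : ∀ n, 0 ≤ a n := fun n => norm_nonneg _
  have hBB : ∀ j, 1 ≤ j → (inner ℂ (B j) (B j) : ℂ) = 1 := by
    intro j hj
    rw [inner_self_eq_norm_sq_to_K, hB_unit j hj]
    norm_num
  -- ⟨B m, fn n⟩ = ⟨B m, f⟩ minus projection term
  have hinner_fn : ∀ n, 1 ≤ n → ∀ m, 1 ≤ m →
      (inner ℂ (B m) (fn n) : ℂ) =
        inner ℂ (B m) f - if m ∈ Finset.Icc 1 (n - 1) then inner ℂ (B m) f else 0 := by
    intro n hn m hm
    rw [hfn n hn, inner_sub_right, inner_sum]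
    congr 1
    have hzero : ∀ i ∈ Finset.Icc 1 (n - 1), i ≠ m →
        (inner ℂ (B m) ((inner ℂ (B i) f : ℂ) • B i) : ℂ) = 0 := by
      intro i hi hne
      rw [inner_smul_right, hB_orth m i hm (Finset.mem_Icc.1 hi).1 (Ne.symm hne), mul_zero]
    by_cases hmem : m ∈ Finset.Icc 1 (n - 1)
    · rw [if_pos hmem, Finset.sum_eq_single_of_mem m hmem hzero,
        inner_smul_right, hBB m hm, mul_one]
    · rw [if_neg hmem, Finset.sum_eq_zero]
      intro i hi
      exact hzero i hi (fun h => hmem (h ▸ hi))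
  -- orthogonality: fn n ⊥ B j for 1 ≤ j ≤ n-1
  have horth : ∀ n, 1 ≤ n → ∀ j, j ∈ Finset.Icc 1 (n - 1) →
      (inner ℂ (fn n) (B j) : ℂ) = 0 := by
    intro n hn j hj
    rw [← inner_conj_symm, hinner_fn n hn j (Finset.mem_Icc.1 hj).1, if_pos hj]
    simp
  -- ⟨fn n, fn n⟩ = ⟨fn n, f⟩
  have hself : ∀ n, 1 ≤ n → (inner ℂ (fn n) (fn n) : ℂ) = inner ℂ (fn n) f := by
    intro n hn
    calc (inner ℂ (fn n) (fn n) : ℂ)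
        = inner ℂ (fn n) (f - ∑ j ∈ Finset.Icc 1 (n - 1), (inner ℂ (B j) f : ℂ) • B j) := by
          rw [← hfn n hn]
      _ = inner ℂ (fn n) f := by
          rw [inner_sub_right, inner_sum,
            Finset.sum_eq_zero (fun j hj => by rw [inner_smul_right, horth n hn j hj, mul_zero]),
            sub_zero]
  -- ‖fn n‖² = ‖⟨fn n, f⟩‖
  have hnorm_sq : ∀ n, 1 ≤ n → ‖fn n‖ ^ 2 = ‖(inner ℂ (fn n) f : ℂ)‖ := by
    intro n hn
    rw [← hself n hn, inner_self_eq_norm_sq_to_K]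
    simp
  -- key bound: ‖fn n‖² ≤ N * a n
  have hkey : ∀ n, 1 ≤ n → ‖fn n‖ ^ 2 ≤ N * a n := by
    intro n hn
    have hsum : HasSum (fun k => (inner ℂ (fn n) (d k • φ k) : ℂ)) (inner ℂ (fn n) f) :=
      hf.mapL (innerSL ℂ (fn n))
    have hbound : ∀ k, ‖(inner ℂ (fn n) (d k • φ k) : ℂ)‖ ≤ ‖d k‖ * a n := by
      intro k
      rw [inner_smul_right, norm_mul]
      exact mul_le_mul_of_nonneg_left (hsel n hn k) (norm_nonneg _)
    have hsummable : Summable (fun k => ‖(inner ℂ (fn n) (d k • φ k) : ℂ)‖) :=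
      Summable.of_nonneg_of_le (fun k => norm_nonneg _) hbound
        (hd_summable.mul_right (a n))
    calc ‖fn n‖ ^ 2 = ‖(inner ℂ (fn n) f : ℂ)‖ := hnorm_sq n hn
      _ ≤ ∑' k, ‖(inner ℂ (fn n) (d k • φ k) : ℂ)‖ := by
          rw [← hsum.tsum_eq]; exact norm_tsum_le_tsum_norm hsummable
      _ ≤ ∑' k, ‖d k‖ * a n := Summable.tsum_le_tsum hbound hsummable (hd_summable.mul_right (a n))
      _ = (∑' k, ‖d k‖) * a n := tsum_mul_right
      _ ≤ N * a n := mul_le_mul_of_nonneg_right hdN (ha_nonneg n)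
  -- recursion (Pythagoras): ‖fn n‖² = ‖fn (n+1)‖² + (a n)²
  have hstep : ∀ n, 1 ≤ n → ‖fn n‖ ^ 2 = ‖fn (n + 1)‖ ^ 2 + (a n) ^ 2 := by
    intro n hn
    have hmem : n ∈ Finset.Icc 1 (n + 1 - 1) := by simp only [Finset.mem_Icc]; omega
    have horthn : (inner ℂ (fn (n + 1)) (B n) : ℂ) = 0 := horth (n + 1) (by omega) n hmem
    have hdecomp : fn n = fn (n + 1) + (inner ℂ (B n) f : ℂ) • B n := by
      rw [hfn (n + 1) (by omega), hfn n hn]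
      have hsplit : Finset.Icc 1 (n + 1 - 1) = insert n (Finset.Icc 1 (n - 1)) := by
        ext i
        simp only [Finset.mem_Icc, Finset.mem_insert]
        omega
      rw [hsplit, Finset.sum_insert (by simp only [Finset.mem_Icc]; omega)]
      abel
    have hperp : (inner ℂ (fn (n + 1)) ((inner ℂ (B n) f : ℂ) • B n) : ℂ) = 0 := by
      rw [inner_smul_right, horthn, mul_zero]
    have hcnorm : ‖(inner ℂ (B n) f : ℂ)‖ = a n := by
      have hc : (inner ℂ (B n) f : ℂ) = inner ℂ (B n) (fn n) := by
        have h := hinner_fn n hn n hn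
        rw [if_neg (by simp [Finset.mem_Icc]; omega), sub_zero] at h
        exact h.symm
      rw [hc, ← inner_conj_symm, RCLike.norm_conj]
    have hp := norm_add_sq_eq_norm_sq_add_norm_sq_of_inner_eq_zero _ _ hperp
    rw [norm_smul, hB_unit n hn, mul_one, hcnorm] at hp
    rw [hdecomp]
    simp only [pow_two]
    exact hp
  -- main induction: ‖fn n‖² ≤ N²/n
  have hmain : ∀ n, 1 ≤ n → ‖fn n‖ ^ 2 ≤ N ^ 2 / n := by
    intro n hn
    induction n with
    | zero => omega
    | succ m ih =>
      rcases Nat.eq_or_lt_of_le hn with h1 | h1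
      · -- base case n = 1
        have hb : a 1 ≤ ‖fn 1‖ := by
          calc a 1 ≤ ‖fn 1‖ * ‖B 1‖ := norm_inner_le_norm _ _
            _ = ‖fn 1‖ := by rw [hB_unit 1 le_rfl, mul_one]
        rw [← h1]
        push_cast
        rw [div_one]
        nlinarith [hkey 1 le_rfl, sq_nonneg (N - ‖fn 1‖), norm_nonneg (fn 1), ha_nonneg 1]
      · -- inductive step, m ≥ 1
        have hm : 1 ≤ m := by omega
        have iht : ‖fn m‖ ^ 2 ≤ N ^ 2 / m := ih hm
        have hk := hkey m hm
        have hs := hstep m hm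
        have haa : (‖fn m‖ ^ 2) ^ 2 / N ^ 2 ≤ (a m) ^ 2 := by
          rw [div_le_iff₀ (by positivity)]
          nlinarith [ha_nonneg m, sq_nonneg (‖fn m‖ ^ 2 - N * a m)]
        have harith := stmt11_arith (N ^ 2) (‖fn m‖ ^ 2) m hm (by positivity)
          (sq_nonneg _) iht
        push_cast
        calc ‖fn (m + 1)‖ ^ 2 = ‖fn m‖ ^ 2 - (a m) ^ 2 := by linarith
          _ ≤ ‖fn m‖ ^ 2 - (‖fn m‖ ^ 2) ^ 2 / N ^ 2 := by linarith
          _ ≤ N ^ 2 / (m + 1) := harith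
  -- conclude
  intro n hn
  have h := hmain n hn
  have hnpos : (0 : ℝ) < n := by exact_mod_cast hn
  have : ‖fn n‖ = Real.sqrt (‖fn n‖ ^ 2) := (Real.sqrt_sq (norm_nonneg _)).symm
  rw [this]
  calc Real.sqrt (‖fn n‖ ^ 2) ≤ Real.sqrt (N ^ 2 / n) := Real.sqrt_le_sqrt h
    _ = N / Real.sqrt n := by
        rw [Real.sqrt_div (sq_nonneg N), Real.sqrt_sq hN.le]
end

section
/- Let c : ℤ × ℤ → ℂ be absolutely summable, i.e., ∑_{(k,l)∈ℤ²} |c(k,l)| < ∞, and suppose conj(c(k,l)) = c(−k,−l) for all k, l ∈ ℤ. Then for all real t, s: ∑_{(k,l)∈ℤ²} c(k,l)·e^{i(kt+ls)} = 2·Re(∑_{k≥0, l≥0} c(k,l)·e^{i(kt+ls)}) + 2·Re(∑_{k≥0, l≤0} c(k,l)·e^{i(kt+ls)}) − ∑_{k∈ℤ} c(k,0)·e^{ikt} − ∑_{l∈ℤ} c(0,l)·e^{ils} − c(0,0). -/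
/-- The term `c(k,l)·e^{i(kt+ls)}` of a double Fourier series. -/
noncomputable def fourierTerm (c : ℤ × ℤ → ℂ) (t s : ℝ) (p : ℤ × ℤ) : ℂ :=
  c p * Complex.exp (Complex.I * ((p.1 : ℂ) * (t : ℂ) + (p.2 : ℂ) * (s : ℂ)))

lemma fourierTerm_norm (c : ℤ × ℤ → ℂ) (t s : ℝ) (p : ℤ × ℤ) :
    ‖fourierTerm c t s p‖ = ‖c p‖ := by
  unfold fourierTerm
  rw [norm_mul]
  have h : ‖Complex.exp (Complex.I * ((p.1 : ℂ) * (t : ℂ) + (p.2 : ℂ) * (s : ℂ)))‖ = 1 := by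
    rw [Complex.norm_exp]
    simp [Complex.mul_re, Complex.add_re, Complex.mul_im]
  rw [h, mul_one]

lemma fourierTerm_conj (c : ℤ × ℤ → ℂ)
    (hsym : ∀ k l : ℤ, (starRingEnd ℂ) (c (k, l)) = c (-k, -l)) (t s : ℝ) (p : ℤ × ℤ) :
    (starRingEnd ℂ) (fourierTerm c t s p) = fourierTerm c t s (-p) := by
  obtain ⟨k, l⟩ := p
  unfold fourierTerm
  rw [map_mul, ← Complex.exp_conj]
  simp only [Prod.neg_mk, Prod.fst, Prod.snd]
  rw [hsym k l]
  congr 1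
  simp only [map_add, map_mul, Complex.conj_I, Complex.conj_ofReal, map_intCast]
  push_cast
  ring

lemma indicator_four_quadrants (f : ℤ × ℤ → ℂ) (p : ℤ × ℤ) :
    Set.indicator {q : ℤ × ℤ | 0 ≤ q.1 ∧ 0 ≤ q.2} f p
      + Set.indicator {q : ℤ × ℤ | q.1 ≤ 0 ∧ q.2 ≤ 0} f p
      + Set.indicator {q : ℤ × ℤ | 0 ≤ q.1 ∧ q.2 ≤ 0} f p
      + Set.indicator {q : ℤ × ℤ | q.1 ≤ 0 ∧ 0 ≤ q.2} f p
    = f p + Set.indicator {q : ℤ × ℤ | q.2 = 0} f p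
      + Set.indicator {q : ℤ × ℤ | q.1 = 0} f p
      + Set.indicator {q : ℤ × ℤ | q.1 = 0 ∧ q.2 = 0} f p := by
  simp only [Set.indicator_apply, Set.mem_setOf_eq]
  split_ifs <;> first | omega | ring

/-- Negation as an equivalence from the first quadrant to the third. -/
def quadEquivB : {p : ℤ × ℤ // 0 ≤ p.1 ∧ 0 ≤ p.2} ≃ ↥{q : ℤ × ℤ | q.1 ≤ 0 ∧ q.2 ≤ 0} where
  toFun p := ⟨-p.val, ⟨neg_nonpos.mpr p.2.1, neg_nonpos.mpr p.2.2⟩⟩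
  invFun p := ⟨-p.val, ⟨neg_nonneg.mpr p.2.1, neg_nonneg.mpr p.2.2⟩⟩
  left_inv p := Subtype.ext (neg_neg p.val)
  right_inv p := Subtype.ext (neg_neg p.val)

/-- Negation as an equivalence from the fourth quadrant to the second. -/
def quadEquivD : {p : ℤ × ℤ // 0 ≤ p.1 ∧ p.2 ≤ 0} ≃ ↥{q : ℤ × ℤ | q.1 ≤ 0 ∧ 0 ≤ q.2} where
  toFun p := ⟨-p.val, ⟨neg_nonpos.mpr p.2.1, neg_nonneg.mpr p.2.2⟩⟩
  invFun p := ⟨-p.val, ⟨neg_nonneg.mpr p.2.1, neg_nonpos.mpr p.2.2⟩⟩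
  left_inv p := Subtype.ext (neg_neg p.val)
  right_inv p := Subtype.ext (neg_neg p.val)

/-- The horizontal axis as a copy of `ℤ`. -/
def axisEquivX : ℤ ≃ ↥{q : ℤ × ℤ | q.2 = 0} where
  toFun k := ⟨(k, 0), rfl⟩
  invFun p := p.val.1
  left_inv k := rfl
  right_inv p := Subtype.ext (Prod.ext rfl p.2.symm)

/-- The vertical axis as a copy of `ℤ`. -/
def axisEquivY : ℤ ≃ ↥{q : ℤ × ℤ | q.1 = 0} where
  toFun l := ⟨(0, l), rfl⟩
  invFun p := p.val.2
  left_inv l := rfl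
  right_inv p := Subtype.ext (Prod.ext p.2.symm rfl)

/-- For absolutely summable coefficients with the real-valuedness symmetry
`conj (c (k,l)) = c (-k,-l)`, the full double Fourier series equals
`2·Re f^{+,+} + 2·Re f^{+,-} − F − G − c(0,0)`. -/
theorem stmt12 (c : ℤ × ℤ → ℂ) (hc : Summable fun p => ‖c p‖)
    (hsym : ∀ k l : ℤ, (starRingEnd ℂ) (c (k, l)) = c (-k, -l)) (t s : ℝ) :
    (∑' p : ℤ × ℤ, fourierTerm c t s p)
      = 2 * (((∑' p : {p : ℤ × ℤ // 0 ≤ p.1 ∧ 0 ≤ p.2}, fourierTerm c t s p.val).re : ℝ) : ℂ)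
        + 2 * (((∑' p : {p : ℤ × ℤ // 0 ≤ p.1 ∧ p.2 ≤ 0}, fourierTerm c t s p.val).re : ℝ) : ℂ)
        - (∑' k : ℤ, c (k, 0) * Complex.exp (Complex.I * (k : ℂ) * (t : ℂ)))
        - (∑' l : ℤ, c (0, l) * Complex.exp (Complex.I * (l : ℂ) * (s : ℂ)))
        - c (0, 0) := by
  set f := fourierTerm c t s with hf_def
  have hf : Summable f := by
    apply Summable.of_norm
    exact hc.congr fun p => (fourierTerm_norm c t s p).symm
  have hind : ∀ S : Set (ℤ × ℤ), Summable (S.indicator f) := fun S => hf.indicator S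
  have key : (∑' p, Set.indicator {q : ℤ × ℤ | 0 ≤ q.1 ∧ 0 ≤ q.2} f p)
      + (∑' p, Set.indicator {q : ℤ × ℤ | q.1 ≤ 0 ∧ q.2 ≤ 0} f p)
      + (∑' p, Set.indicator {q : ℤ × ℤ | 0 ≤ q.1 ∧ q.2 ≤ 0} f p)
      + (∑' p, Set.indicator {q : ℤ × ℤ | q.1 ≤ 0 ∧ 0 ≤ q.2} f p)
      = (∑' p, f p) + (∑' p, Set.indicator {q : ℤ × ℤ | q.2 = 0} f p)
        + (∑' p, Set.indicator {q : ℤ × ℤ | q.1 = 0} f p)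
        + (∑' p, Set.indicator {q : ℤ × ℤ | q.1 = 0 ∧ q.2 = 0} f p) := by
    rw [← Summable.tsum_add (hind _) (hind _), ← Summable.tsum_add ((hind _).add (hind _)) (hind _),
      ← Summable.tsum_add (((hind _).add (hind _)).add (hind _)) (hind _),
      ← Summable.tsum_add hf (hind _), ← Summable.tsum_add (hf.add (hind _)) (hind _),
      ← Summable.tsum_add ((hf.add (hind _)).add (hind _)) (hind _)]
    exact tsum_congr fun p => indicator_four_quadrants f p
  have hA : (∑' p, Set.indicator {q : ℤ × ℤ | 0 ≤ q.1 ∧ 0 ≤ q.2} f p)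
      = ∑' p : {p : ℤ × ℤ // 0 ≤ p.1 ∧ 0 ≤ p.2}, f p.val :=
    (tsum_subtype {q : ℤ × ℤ | 0 ≤ q.1 ∧ 0 ≤ q.2} f).symm
  have hC : (∑' p, Set.indicator {q : ℤ × ℤ | 0 ≤ q.1 ∧ q.2 ≤ 0} f p)
      = ∑' p : {p : ℤ × ℤ // 0 ≤ p.1 ∧ p.2 ≤ 0}, f p.val :=
    (tsum_subtype {q : ℤ × ℤ | 0 ≤ q.1 ∧ q.2 ≤ 0} f).symm
  have hconj : ∀ p : ℤ × ℤ, (starRingEnd ℂ) (f p) = f (-p) := fourierTerm_conj c hsym t s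
  have hB : (∑' p, Set.indicator {q : ℤ × ℤ | q.1 ≤ 0 ∧ q.2 ≤ 0} f p)
      = (starRingEnd ℂ) (∑' p : {p : ℤ × ℤ // 0 ≤ p.1 ∧ 0 ≤ p.2}, f p.val) := by
    symm
    calc (starRingEnd ℂ) (∑' p : {p : ℤ × ℤ // 0 ≤ p.1 ∧ 0 ≤ p.2}, f p.val)
        = ∑' p : {p : ℤ × ℤ // 0 ≤ p.1 ∧ 0 ≤ p.2}, star (f p.val) := tsum_star
      _ = ∑' p : {p : ℤ × ℤ // 0 ≤ p.1 ∧ 0 ≤ p.2}, f (-p.val) :=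
          tsum_congr fun p => hconj p.val
      _ = ∑' p : ↥{q : ℤ × ℤ | q.1 ≤ 0 ∧ q.2 ≤ 0}, f p.val :=
          quadEquivB.tsum_eq fun p : ↥{q : ℤ × ℤ | q.1 ≤ 0 ∧ q.2 ≤ 0} => f p.val
      _ = ∑' p, Set.indicator {q : ℤ × ℤ | q.1 ≤ 0 ∧ q.2 ≤ 0} f p :=
          tsum_subtype {q : ℤ × ℤ | q.1 ≤ 0 ∧ q.2 ≤ 0} f
  have hD : (∑' p, Set.indicator {q : ℤ × ℤ | q.1 ≤ 0 ∧ 0 ≤ q.2} f p)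
      = (starRingEnd ℂ) (∑' p : {p : ℤ × ℤ // 0 ≤ p.1 ∧ p.2 ≤ 0}, f p.val) := by
    symm
    calc (starRingEnd ℂ) (∑' p : {p : ℤ × ℤ // 0 ≤ p.1 ∧ p.2 ≤ 0}, f p.val)
        = ∑' p : {p : ℤ × ℤ // 0 ≤ p.1 ∧ p.2 ≤ 0}, star (f p.val) := tsum_star
      _ = ∑' p : {p : ℤ × ℤ // 0 ≤ p.1 ∧ p.2 ≤ 0}, f (-p.val) :=
          tsum_congr fun p => hconj p.val
      _ = ∑' p : ↥{q : ℤ × ℤ | q.1 ≤ 0 ∧ 0 ≤ q.2}, f p.val :=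
          quadEquivD.tsum_eq fun p : ↥{q : ℤ × ℤ | q.1 ≤ 0 ∧ 0 ≤ q.2} => f p.val
      _ = ∑' p, Set.indicator {q : ℤ × ℤ | q.1 ≤ 0 ∧ 0 ≤ q.2} f p :=
          tsum_subtype {q : ℤ × ℤ | q.1 ≤ 0 ∧ 0 ≤ q.2} f
  have hX : (∑' p, Set.indicator {q : ℤ × ℤ | q.2 = 0} f p)
      = ∑' k : ℤ, c (k, 0) * Complex.exp (Complex.I * (k : ℂ) * (t : ℂ)) := by
    rw [← tsum_subtype {q : ℤ × ℤ | q.2 = 0} f,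
      ← axisEquivX.tsum_eq fun p : ↥{q : ℤ × ℤ | q.2 = 0} => f p.val]
    refine tsum_congr fun k => ?_
    show f (k, 0) = _
    rw [hf_def]
    unfold fourierTerm
    norm_num [mul_assoc]
  have hY : (∑' p, Set.indicator {q : ℤ × ℤ | q.1 = 0} f p)
      = ∑' l : ℤ, c (0, l) * Complex.exp (Complex.I * (l : ℂ) * (s : ℂ)) := by
    rw [← tsum_subtype {q : ℤ × ℤ | q.1 = 0} f,
      ← axisEquivY.tsum_eq fun p : ↥{q : ℤ × ℤ | q.1 = 0} => f p.val]
    refine tsum_congr fun l => ?_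
    show f (0, l) = _
    rw [hf_def]
    unfold fourierTerm
    norm_num [mul_assoc]
  have hO : (∑' p, Set.indicator {q : ℤ × ℤ | q.1 = 0 ∧ q.2 = 0} f p) = c (0, 0) := by
    rw [tsum_eq_single ((0, 0) : ℤ × ℤ)]
    · have h00 : ((0, 0) : ℤ × ℤ) ∈ {q : ℤ × ℤ | q.1 = 0 ∧ q.2 = 0} := ⟨rfl, rfl⟩
      rw [Set.indicator_of_mem h00, hf_def]
      unfold fourierTerm
      norm_num
    · intro b hb
      apply Set.indicator_of_notMem
      simp only [Set.mem_setOf_eq]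
      intro ⟨h1, h2⟩
      exact hb (Prod.ext h1 h2)
  have h2A : (2 : ℂ) * (((∑' p : {p : ℤ × ℤ // 0 ≤ p.1 ∧ 0 ≤ p.2}, f p.val).re : ℝ) : ℂ)
      = (∑' p : {p : ℤ × ℤ // 0 ≤ p.1 ∧ 0 ≤ p.2}, f p.val)
        + (starRingEnd ℂ) (∑' p : {p : ℤ × ℤ // 0 ≤ p.1 ∧ 0 ≤ p.2}, f p.val) := by
    rw [Complex.add_conj]; push_cast; ring
  have h2C : (2 : ℂ) * (((∑' p : {p : ℤ × ℤ // 0 ≤ p.1 ∧ p.2 ≤ 0}, f p.val).re : ℝ) : ℂ)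
      = (∑' p : {p : ℤ × ℤ // 0 ≤ p.1 ∧ p.2 ≤ 0}, f p.val)
        + (starRingEnd ℂ) (∑' p : {p : ℤ × ℤ // 0 ≤ p.1 ∧ p.2 ≤ 0}, f p.val) := by
    rw [Complex.add_conj]; push_cast; ring
  rw [h2A, h2C]
  rw [hA, hB, hC, hD, hX, hY, hO] at key
  linear_combination -key
end

section
/- Let (a_k)_{k≥1} be a sequence of complex numbers with |a_k| < 1 for all k. For n ≥ 1 define B_n : ℝ → ℂ by B_n(t) = (√(1−|a_n|²)/(1 − conj(a_n)·e^{it})) · ∏_{l=1}^{n−1} (e^{it} − a_l)/(1 − conj(a_l)·e^{it}). Then for all m, n ≥ 1, (1/2π) ∫_0^{2π} B_m(t)·conj(B_n(t)) dt = 1 if m = n and 0 otherwise. -/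
open scoped Real

/-- The `n`-th Takenaka–Malmquist function on the unit circle, for parameters `a`. -/
noncomputable def TM (a : ℕ → ℂ) (n : ℕ) (t : ℝ) : ℂ :=
  ((Real.sqrt (1 - ‖a n‖ ^ 2) : ℝ) : ℂ)
      / (1 - (starRingEnd ℂ) (a n) * Complex.exp (Complex.I * (t : ℂ))) *
    ∏ l ∈ Finset.Icc 1 (n - 1),
      (Complex.exp (Complex.I * (t : ℂ)) - a l)
        / (1 - (starRingEnd ℂ) (a l) * Complex.exp (Complex.I * (t : ℂ)))

noncomputable def TMF (a : ℕ → ℂ) (m n : ℕ) (z : ℂ) : ℂ :=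
  ((Real.sqrt (1 - ‖a m‖ ^ 2) : ℝ) : ℂ) * ((Real.sqrt (1 - ‖a n‖ ^ 2) : ℝ) : ℂ)
      / (1 - (starRingEnd ℂ) (a m) * z) *
    ∏ l ∈ Finset.Icc n (m - 1), (z - a l) / (1 - (starRingEnd ℂ) (a l) * z)

lemma d_ne {a z : ℂ} (hal : ‖a‖ < 1) (hz : ‖z‖ ≤ 1) : 1 - (starRingEnd ℂ) a * z ≠ 0 := by
  intro h
  have h1 : (starRingEnd ℂ) a * z = 1 := by linear_combination -h
  have h2 : ‖(starRingEnd ℂ) a * z‖ = 1 := by rw [h1]; simp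
  rw [norm_mul, RCLike.norm_conj] at h2
  nlinarith [norm_nonneg a, norm_nonneg z]

lemma e_ne {a z : ℂ} (hal : ‖a‖ < 1) (hz : ‖z‖ = 1) : z - a ≠ 0 := by
  intro h
  have : z = a := by linear_combination h
  rw [this] at hz; linarith

lemma intervalIntegral_conj {f : ℝ → ℂ} {a b : ℝ} :
    (∫ t in a..b, (starRingEnd ℂ) (f t)) = (starRingEnd ℂ) (∫ t in a..b, f t) := by
  simp only [intervalIntegral, ← integral_conj, map_sub]

lemma TM_pointwise (a : ℕ → ℂ) (ha : ∀ k, 1 ≤ k → ‖a k‖ < 1) (n m : ℕ)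
    (hn : 1 ≤ n) (hm : n ≤ m) (t : ℝ) :
    Complex.I * (TM a m t * (starRingEnd ℂ) (TM a n t)) =
      circleMap 0 1 t * Complex.I *
        ((circleMap 0 1 t - a n)⁻¹ * TMF a m n (circleMap 0 1 t)) := by
  have hm1 : 1 ≤ m := le_trans hn hm
  set z : ℂ := circleMap 0 1 t with hzdef
  have hz1 : ‖z‖ = 1 := by
    simp [hzdef, norm_circleMap_zero]
  have hz0 : z ≠ 0 := by
    intro h; rw [h] at hz1; simp at hz1
  have hconj : (starRingEnd ℂ) z = z⁻¹ := by
    rw [Complex.inv_def, Complex.normSq_eq_norm_sq, hz1]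
    simp
  have hexp : Complex.exp (Complex.I * (t : ℂ)) = z := by
    simp [hzdef, circleMap_zero, mul_comm]
  -- per-factor conjugate identity
  have hfac : ∀ l : ℕ, 1 ≤ l →
      (z⁻¹ - (starRingEnd ℂ) (a l)) / (1 - a l * z⁻¹) =
        (1 - (starRingEnd ℂ) (a l) * z) / (z - a l) := by
    intro l hl
    have h1 : z⁻¹ - (starRingEnd ℂ) (a l) = z⁻¹ * (1 - (starRingEnd ℂ) (a l) * z) := by
      field_simp
    have h2 : (1 : ℂ) - a l * z⁻¹ = z⁻¹ * (z - a l) := by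
      field_simp
    rw [h1, h2, mul_div_mul_left _ _ (inv_ne_zero hz0)]
  have hTMm : TM a m t = ((Real.sqrt (1 - ‖a m‖ ^ 2) : ℝ) : ℂ)
      / (1 - (starRingEnd ℂ) (a m) * z) *
      ∏ l ∈ Finset.Icc 1 (m - 1), (z - a l) / (1 - (starRingEnd ℂ) (a l) * z) := by
    rw [TM, hexp]
  have hTMnc : (starRingEnd ℂ) (TM a n t) =
      ((Real.sqrt (1 - ‖a n‖ ^ 2) : ℝ) : ℂ) * z / (z - a n) *
      ∏ l ∈ Finset.Icc 1 (n - 1), (1 - (starRingEnd ℂ) (a l) * z) / (z - a l) := by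
    rw [TM, hexp]
    simp only [map_mul, map_div₀, map_prod, map_sub, map_one, Complex.conj_conj,
      Complex.conj_ofReal, hconj]
    congr 1
    · have h2 : (1 : ℂ) - a n * z⁻¹ = z⁻¹ * (z - a n) := by field_simp
      rw [h2, div_mul_eq_div_div, div_inv_eq_mul]
    · refine Finset.prod_congr rfl fun l hl => ?_
      have hl1 : 1 ≤ l := (Finset.mem_Icc.mp hl).1
      exact hfac l hl1
  -- split the big product
  have hIcc1 : Finset.Icc 1 (m - 1) = Finset.Ioc 0 (m - 1) := Finset.Icc_add_one_left_eq_Ioc 0 _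
  have hIcc2 : Finset.Icc 1 (n - 1) = Finset.Ioc 0 (n - 1) := Finset.Icc_add_one_left_eq_Ioc 0 _
  have hIcc3 : Finset.Icc n (m - 1) = Finset.Ioc (n - 1) (m - 1) := by
    rw [← Finset.Icc_add_one_left_eq_Ioc]; congr 1; omega
  have hsplit : (∏ l ∈ Finset.Icc 1 (m - 1), (z - a l) / (1 - (starRingEnd ℂ) (a l) * z)) =
      (∏ l ∈ Finset.Icc 1 (n - 1), (z - a l) / (1 - (starRingEnd ℂ) (a l) * z)) *
      ∏ l ∈ Finset.Icc n (m - 1), (z - a l) / (1 - (starRingEnd ℂ) (a l) * z) := by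
    rw [hIcc1, hIcc2, hIcc3]
    exact (Finset.prod_Ioc_consecutive _ (Nat.zero_le _) (by omega)).symm
  have hPQ : (∏ l ∈ Finset.Icc 1 (n - 1), (z - a l) / (1 - (starRingEnd ℂ) (a l) * z)) *
      (∏ l ∈ Finset.Icc 1 (n - 1), (1 - (starRingEnd ℂ) (a l) * z) / (z - a l)) = 1 := by
    rw [← Finset.prod_mul_distrib]
    refine Finset.prod_eq_one fun l hl => ?_
    have hl1 : 1 ≤ l := (Finset.mem_Icc.mp hl).1
    have hd := d_ne (ha l hl1) hz1.le
    have he := e_ne (ha l hl1) hz1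
    field_simp
    exact div_self (by rwa [mul_comm] at hd)
  rw [hTMm, hTMnc, hsplit, TMF]
  set P1 := ∏ l ∈ Finset.Icc 1 (n - 1), (z - a l) / (1 - (starRingEnd ℂ) (a l) * z) with hP1
  set Q1 := ∏ l ∈ Finset.Icc 1 (n - 1), (1 - (starRingEnd ℂ) (a l) * z) / (z - a l) with hQ1
  set P2 := ∏ l ∈ Finset.Icc n (m - 1), (z - a l) / (1 - (starRingEnd ℂ) (a l) * z) with hP2
  have key : Complex.I * (((Real.sqrt (1 - ‖a m‖ ^ 2) : ℝ) : ℂ)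
        / (1 - (starRingEnd ℂ) (a m) * z) * (P1 * P2) *
      (((Real.sqrt (1 - ‖a n‖ ^ 2) : ℝ) : ℂ) * z / (z - a n) * Q1)) =
      z * Complex.I * ((z - a n)⁻¹ *
        (((Real.sqrt (1 - ‖a m‖ ^ 2) : ℝ) : ℂ) * ((Real.sqrt (1 - ‖a n‖ ^ 2) : ℝ) : ℂ)
          / (1 - (starRingEnd ℂ) (a m) * z) * P2)) * (P1 * Q1) := by
    ring
  rw [key, hPQ, mul_one]

lemma TM_key (a : ℕ → ℂ) (ha : ∀ k, 1 ≤ k → ‖a k‖ < 1) (n m : ℕ)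
    (hn : 1 ≤ n) (hm : n ≤ m) :
    (1 / (2 * π) : ℂ) * ∫ t in (0:ℝ)..(2 * π), TM a m t * (starRingEnd ℂ) (TM a n t)
      = if m = n then 1 else 0 := by
  have hm1 : 1 ≤ m := le_trans hn hm
  -- differentiability of TMF on the closed ball
  have hFdiff : ∀ z ∈ Metric.closedBall (0:ℂ) 1, DifferentiableAt ℂ (TMF a m n) z := by
    intro z hz
    rw [Metric.mem_closedBall, dist_zero_right] at hz
    apply DifferentiableAt.mul
    · exact (differentiableAt_const _).div
        ((differentiableAt_const _).sub ((differentiableAt_const _).mul differentiableAt_id))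
        (d_ne (ha m hm1) hz)
    · apply DifferentiableAt.fun_finsetProd
      intro l hl
      have hl1 : 1 ≤ l := le_trans hn (Finset.mem_Icc.mp hl).1
      exact (differentiableAt_id.sub (differentiableAt_const _)).div
        ((differentiableAt_const _).sub ((differentiableAt_const _).mul differentiableAt_id))
        (d_ne (ha l hl1) hz)
  have han : a n ∈ Metric.ball (0:ℂ) 1 := by
    rw [Metric.mem_ball, dist_zero_right]; exact ha n hn
  have hcauchy : (∮ z in C(0, 1), (z - a n)⁻¹ • TMF a m n z)
      = (2 * (π:ℝ) * Complex.I : ℂ) • TMF a m n (a n) :=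
    Complex.circleIntegral_sub_inv_smul_of_differentiable_on_off_countable
      Set.countable_empty han
      (fun z hz => (hFdiff z hz).continuousAt.continuousWithinAt)
      (fun z hz => hFdiff z (Metric.ball_subset_closedBall hz.1))
  have hunfold : (∮ z in C(0, 1), (z - a n)⁻¹ • TMF a m n z)
      = ∫ t in (0:ℝ)..(2 * π), circleMap 0 1 t * Complex.I *
          ((circleMap 0 1 t - a n)⁻¹ * TMF a m n (circleMap 0 1 t)) := by
    simp [circleIntegral, deriv_circleMap, smul_eq_mul, mul_assoc]
  have hint : Complex.I * ∫ t in (0:ℝ)..(2 * π), TM a m t * (starRingEnd ℂ) (TM a n t)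
      = (2 * (π:ℝ) * Complex.I : ℂ) * TMF a m n (a n) := by
    have h1 : (∫ t in (0:ℝ)..(2 * π), circleMap 0 1 t * Complex.I *
          ((circleMap 0 1 t - a n)⁻¹ * TMF a m n (circleMap 0 1 t)))
        = ∫ t in (0:ℝ)..(2 * π), Complex.I * (TM a m t * (starRingEnd ℂ) (TM a n t)) :=
      intervalIntegral.integral_congr fun t _ => (TM_pointwise a ha n m hn hm t).symm
    have h2 := hcauchy
    rw [hunfold, h1, intervalIntegral.integral_const_mul] at h2
    simpa [smul_eq_mul] using h2
  have hval : TMF a m n (a n) = if m = n then 1 else 0 := by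
    by_cases hmn : m = n
    · subst hmn
      rw [if_pos rfl, TMF, Finset.Icc_eq_empty (by omega : ¬ m ≤ m - 1),
        Finset.prod_empty, mul_one]
      have hx : (0:ℝ) ≤ 1 - ‖a m‖ ^ 2 := by nlinarith [ha m hm1, norm_nonneg (a m)]
      have h1 : ((Real.sqrt (1 - ‖a m‖ ^ 2) : ℝ) : ℂ) * ((Real.sqrt (1 - ‖a m‖ ^ 2) : ℝ) : ℂ)
          = ((1 - ‖a m‖ ^ 2 : ℝ) : ℂ) := by
        rw [← Complex.ofReal_mul, Real.mul_self_sqrt hx]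
      have h2 : (1 : ℂ) - (starRingEnd ℂ) (a m) * a m = ((1 - ‖a m‖ ^ 2 : ℝ) : ℂ) := by
        rw [mul_comm, Complex.mul_conj, Complex.normSq_eq_norm_sq]
        push_cast; ring
      rw [h1, h2, div_self (Complex.ofReal_ne_zero.mpr
        (by nlinarith [ha m hm1, norm_nonneg (a m)] : (1 - ‖a m‖ ^ 2 : ℝ) ≠ 0))]
    · have hlt : n < m := lt_of_le_of_ne hm (fun h => hmn h.symm)
      simp only [hmn, if_false]
      rw [TMF]
      rw [Finset.prod_eq_zero (Finset.mem_Icc.mpr ⟨le_refl n, by omega⟩)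
        (by rw [sub_self, zero_div])]
      rw [mul_zero]
    -- nothing
  have hI : (Complex.I : ℂ) ≠ 0 := Complex.I_ne_zero
  have h2pi : ((2 * π : ℝ) : ℂ) ≠ 0 := by
    simp [Real.pi_ne_zero]
  have hfin : (∫ t in (0:ℝ)..(2 * π), TM a m t * (starRingEnd ℂ) (TM a n t))
      = 2 * (π:ℝ) * TMF a m n (a n) := by
    have h3 : (2 * (π:ℝ) * Complex.I : ℂ) * TMF a m n (a n)
        = Complex.I * (2 * (π:ℝ) * TMF a m n (a n)) := by ring
    exact mul_left_cancel₀ hI (hint.trans h3)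
  rw [hfin, hval]
  generalize (if m = n then (1:ℂ) else 0) = X
  have hπ : ((π:ℝ) : ℂ) ≠ 0 := Complex.ofReal_ne_zero.mpr Real.pi_ne_zero
  field_simp

/-- The Takenaka–Malmquist system is orthonormal on the unit circle with respect to the
normalized inner product `(1/2π)∫₀^{2π} f conj g`. -/
theorem stmt15 (a : ℕ → ℂ) (ha : ∀ k, 1 ≤ k → ‖a k‖ < 1) :
    ∀ m n : ℕ, 1 ≤ m → 1 ≤ n →
      (1 / (2 * π) : ℂ) * ∫ t in (0:ℝ)..(2 * π), TM a m t * (starRingEnd ℂ) (TM a n t)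
        = if m = n then 1 else 0 := by
  intro m n hm hn
  rcases le_or_gt n m with h | h
  · exact TM_key a ha n m hn h
  · have hsymm : (∫ t in (0:ℝ)..(2 * π), TM a m t * (starRingEnd ℂ) (TM a n t))
        = (starRingEnd ℂ) (∫ t in (0:ℝ)..(2 * π), TM a n t * (starRingEnd ℂ) (TM a m t)) := by
      rw [← intervalIntegral_conj]
      refine intervalIntegral.integral_congr fun t _ => ?_
      rw [map_mul, Complex.conj_conj, mul_comm]
    have hkey := TM_key a ha m n hm h.le
    rw [hsymm]
    have hne : n ≠ m := h.ne'
    rw [if_neg hne] at hkey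
    rw [if_neg (fun hh : m = n => hne hh.symm)]
    have h2pi : ((2 * π : ℝ) : ℂ) ≠ 0 := by simp [Real.pi_ne_zero]
    have : (∫ t in (0:ℝ)..(2 * π), TM a n t * (starRingEnd ℂ) (TM a m t)) = 0 := by
      rcases mul_eq_zero.mp hkey with h1 | h1
      · exact absurd h1 (by simp [Real.pi_ne_zero])
      · exact h1
    rw [this, map_zero, mul_zero]
end
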